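/- arXiv:2505.17282 — 4 statements merged into one kernel-verified Lean document; each statement's English description precedes it below -/
import Mathlib

section
/- For any p◦ ≠ 0, the max-margin problem associated with p◦ (minimize ||p||_2 over p in the equivalence class P_{p◦} subject to p·(E_s − E_{s'}) ≥ 1 for all s ∈ S_X(P_{p◦}), all s' ∈ X \ S_X(P_{p◦}), and all sequences X in the dataset) is feasible and has a unique solution p̂. -/
open MeasureTheory ProbabilityTheory Filter Topology
open scoped BigOperators ENNReal NNReal Classical

noncomputable section

/-- `ℝ^d` with the Euclidean inner product. -/
abbrev Vec (d : ℕ) := EuclideanSpace ℝ (Fin d)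

variable {S : Type*}

/-- The Euclidean (real) inner product on `ℝ^d`. -/
def iprod {d : ℕ} (x y : Vec d) : ℝ := inner ℝ x y

/-- Output of the one-layer softmax attention model
`f(X; p, E) = (Σ_i exp(p·E_{x_i}) E_{x_i}·v) / (Σ_j exp(p·E_{x_j}))`. -/
def fAttn {d T : ℕ} (Emb : S → Vec d) (v p : Vec d) (X : Fin T → S) : ℝ :=
  (∑ i, Real.exp ((iprod (p) (Emb (X i)))) * (iprod (Emb (X i)) (v))) /
    ∑ j, Real.exp ((iprod (p) (Emb (X j))))

/-- Empirical logistic loss `L(E, p)`. -/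
def lossL {d T n : ℕ} (X : Fin n → Fin T → S) (y : Fin n → ℝ)
    (Emb : S → Vec d) (v p : Vec d) : ℝ :=
  (1 / n : ℝ) * ∑ k, Real.log (1 + Real.exp (- y k * fAttn Emb v p (X k)))

/-- Average signed frequency `α_s` of a token `s`. -/
def alphaFreq {T n : ℕ} (X : Fin n → Fin T → S) (y : Fin n → ℝ) (s : S) : ℝ :=
  (1 / (n * T) : ℝ) * ∑ k, y k * ∑ i, (if X k i = s then (1 : ℝ) else 0)

/-- Softmax weight `q_i(X)`. -/
def qw {d T : ℕ} (Emb : S → Vec d) (p : Vec d) (X : Fin T → S) (i : Fin T) : ℝ :=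
  Real.exp ((iprod (p) (Emb (X i)))) / ∑ j, Real.exp ((iprod (p) (Emb (X j))))

/-- `g(X, y) = 1 / (1 + exp(y f(X; p, E)))`. -/
def gfun {d T : ℕ} (Emb : S → Vec d) (v p : Vec d) (X : Fin T → S) (yv : ℝ) : ℝ :=
  1 / (1 + Real.exp (yv * fAttn Emb v p X))

/-- Partial gradient `∇_{E_s} L(E, p)` of the loss with respect to the embedding of token `s`. -/
def gradE {d T n : ℕ} (X : Fin n → Fin T → S) (y : Fin n → ℝ)
    (Emb : S → Vec d) (v p : Vec d) (s : S) : Vec d :=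
  gradient (fun u => lossL X y (Function.update Emb s u) v p) (Emb s)

/-- Gradient `∇_p L(E, p)` of the loss with respect to the ⟨cls⟩ embedding `p`. -/
def gradP {d T n : ℕ} (X : Fin n → Fin T → S) (y : Fin n → ℝ)
    (Emb : S → Vec d) (v p : Vec d) : Vec d :=
  gradient (fun u => lossL X y Emb v u) p

/-- The Gaussian `N(0, (1/d) I_d)` on `ℝ^d`. -/
def stdGaussianVec (d : ℕ) : Measure (Vec d) :=
  (Measure.pi fun _ : Fin d => gaussianReal 0 (1 / d : ℝ≥0)).map
    (MeasurableEquiv.toLp 2 (Fin d → ℝ))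

/-- i.i.d. `N(0, (1/d) I_d)` initialization of all the token embeddings `E_s^0` (`s ∈ S`)
and of the ⟨cls⟩ embedding `p^0`. -/
def initMeasure (d : ℕ) (S : Type*) [Fintype S] : Measure ((S ⊕ Unit) → Vec d) :=
  Measure.pi fun _ => stdGaussianVec d

/-- Initial token embeddings `E^0`. -/
def E0 {d : ℕ} (ω : (S ⊕ Unit) → Vec d) (s : S) : Vec d := ω (Sum.inl s)

/-- Initial ⟨cls⟩ embedding `p^0`. -/
def pInit {d : ℕ} (ω : (S ⊕ Unit) → Vec d) : Vec d := ω (Sum.inr ())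

/-- Token embeddings `E^1` after one gradient-descent step with step size `η0`. -/
def E1 {d T n : ℕ} (X : Fin n → Fin T → S) (y : Fin n → ℝ) (v : Vec d) (η0 : ℝ)
    (ω : (S ⊕ Unit) → Vec d) (s : S) : Vec d :=
  E0 ω s - η0 • gradE X y (E0 ω) v (pInit ω) s

/-- The ⟨cls⟩ embedding `p^1` after one gradient-descent step with step size `η0`. -/
def p1 {d T n : ℕ} (X : Fin n → Fin T → S) (y : Fin n → ℝ) (v : Vec d) (η0 : ℝ)
    (ω : (S ⊕ Unit) → Vec d) : Vec d :=
  pInit ω - η0 • gradP X y (E0 ω) v (pInit ω)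

/-- Selected-token set `S_X(p) = {s ∈ X : p·E_s = max_{s' ∈ X} p·E_{s'}}`. -/
def selSet {d T : ℕ} (Emb : S → Vec d) (p : Vec d) (X : Fin T → S) : Set S :=
  {s | s ∈ Set.range X ∧ ∀ i, (iprod (p) (Emb (X i))) ≤ (iprod (p) (Emb s))}

/-- Secondary selection set `S²_X(p)`. -/
def sel2Set {d T : ℕ} (Emb : S → Vec d) (p : Vec d) (X : Fin T → S) : Set S :=
  {s | s ∈ Set.range X ∧ s ∉ selSet Emb p X ∧
    ∀ s' ∈ Set.range X, s' ∉ selSet Emb p X → (iprod (p) (Emb s')) ≤ (iprod (p) (Emb s))}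

/-- Tokens of `X` selected neither in first nor in second place: `S^<_X(p)`. -/
def selLtSet {d T : ℕ} (Emb : S → Vec d) (p : Vec d) (X : Fin T → S) : Set S :=
  Set.range X \ (selSet Emb p X ∪ sel2Set Emb p X)

/-- Feasibility for the max-margin problem associated with `p₀`: `p` lies in the equivalence
class of `p₀` (same selection in every sequence) and separates, with margin 1, the selected
tokens from the non-selected tokens of every sequence. -/
def MMFeasible {d T n : ℕ} (Emb : S → Vec d) (X : Fin n → Fin T → S) (p₀ p : Vec d) : Prop :=
  (∀ k, selSet Emb p (X k) = selSet Emb p₀ (X k)) ∧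
  ∀ k, ∀ s ∈ selSet Emb p₀ (X k), ∀ s' ∈ Set.range (X k),
    s' ∉ selSet Emb p₀ (X k) → 1 ≤ (iprod (p) (Emb s - Emb s'))

/-- `phat` solves the max-margin problem associated with `p₀`. -/
def MaxMarginSol {d T n : ℕ} (Emb : S → Vec d) (X : Fin n → Fin T → S)
    (p₀ phat : Vec d) : Prop :=
  MMFeasible Emb X p₀ phat ∧ ∀ q : Vec d, MMFeasible Emb X p₀ q → ‖phat‖ ≤ ‖q‖

/-- A token is completely positive if it appears in the dataset and only in sequences with
label `+1`. -/
def ComplPos {T n : ℕ} (X : Fin n → Fin T → S) (y : Fin n → ℝ) (s : S) : Prop :=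
  (∃ k i, X k i = s) ∧ ∀ k, (∃ i, X k i = s) → y k = 1

/-- A token is completely negative if it appears in the dataset and only in sequences with
label `-1`. -/
def ComplNeg {T n : ℕ} (X : Fin n → Fin T → S) (y : Fin n → ℝ) (s : S) : Prop :=
  (∃ k i, X k i = s) ∧ ∀ k, (∃ i, X k i = s) → y k = -1

/-- Assumption A: every sequence `X_k` contains a single completely positive token or a single
completely negative token, denoted `sstar k`, and all its remaining tokens are irrelevant. -/
def AssumptionA {T n : ℕ} (X : Fin n → Fin T → S) (y : Fin n → ℝ) (sstar : Fin n → S) : Prop :=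
  ∀ k, (ComplPos X y (sstar k) ∨ ComplNeg X y (sstar k)) ∧
    (∃! i, X k i = sstar k) ∧
    ∀ i, X k i ≠ sstar k → alphaFreq X y (X k i) = 0

/-- `ptraj` is a gradient-flow trajectory for `p ↦ L(Emb, p)`. -/
def GradFlow {d T n : ℕ} (X : Fin n → Fin T → S) (y : Fin n → ℝ)
    (Emb : S → Vec d) (v : Vec d) (ptraj : ℝ → Vec d) : Prop :=
  ∀ t : ℝ, HasDerivAt ptraj (-(gradP X y Emb v (ptraj t))) t

/-! ### Auxiliary material for Statement 1 -/

lemma iprod_smul_left' {d : ℕ} (c : ℝ) (p v : Vec d) : iprod (c • p) v = c * iprod p v := by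
  unfold iprod; exact real_inner_smul_left p v c

lemma iprod_sub_right' {d : ℕ} (p a b : Vec d) : iprod p (a - b) = iprod p a - iprod p b := by
  unfold iprod; exact inner_sub_right p a b

lemma iprod_combo' {d : ℕ} (a b : ℝ) (p q v : Vec d) :
    iprod (a • p + b • q) v = a * iprod p v + b * iprod q v := by
  unfold iprod; rw [inner_add_left, real_inner_smul_left, real_inner_smul_left]

lemma continuous_iprod_left' {d : ℕ} (v : Vec d) : Continuous fun p : Vec d => iprod p v :=
  continuous_id.inner continuous_const

/-- The feasible set of the max-margin problem, described by non-strict linear inequalities. -/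
def CsetMM {S : Type*} {d T n : ℕ} (Emb : S → Vec d) (X : Fin n → Fin T → S)
    (p₀ : Vec d) : Set (Vec d) :=
  {p | (∀ k, ∀ s ∈ selSet Emb p₀ (X k), ∀ i, iprod p (Emb (X k i)) ≤ iprod p (Emb s)) ∧
       ∀ k, ∀ s ∈ selSet Emb p₀ (X k), ∀ s' ∈ Set.range (X k),
         s' ∉ selSet Emb p₀ (X k) → 1 ≤ iprod p (Emb s - Emb s')}

/-- With a nonempty sequence, the selection set is nonempty. -/
lemma selSet_nonempty' {S : Type*} {d T : ℕ} (hT : 0 < T) (Emb : S → Vec d) (p : Vec d)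
    (X : Fin T → S) : ∃ i, X i ∈ selSet Emb p X := by
  obtain ⟨i, -, hi⟩ := Finset.univ.exists_max_image (fun i => iprod p (Emb (X i)))
    ⟨⟨0, hT⟩, Finset.mem_univ _⟩
  exact ⟨i, ⟨i, rfl⟩, fun j => hi j (Finset.mem_univ _)⟩

lemma mmFeasible_iff_mem_CsetMM {S : Type*} {d T n : ℕ} (hT : 0 < T) (Emb : S → Vec d)
    (X : Fin n → Fin T → S) (p₀ p : Vec d) :
    MMFeasible Emb X p₀ p ↔ p ∈ CsetMM Emb X p₀ := by
  constructor
  · rintro ⟨hsel, hmar⟩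
    refine ⟨fun k s hs i => ?_, hmar⟩
    have hs' : s ∈ selSet Emb p (X k) := by rw [hsel k]; exact hs
    exact hs'.2 i
  · rintro ⟨hA, hB⟩
    refine ⟨fun k => ?_, hB⟩
    ext s
    constructor
    · rintro ⟨hr, hmax⟩
      by_contra hs
      obtain ⟨i₀, hi₀⟩ := selSet_nonempty' hT Emb p₀ (X k)
      have h1 : 1 ≤ iprod p (Emb (X k i₀) - Emb s) := hB k _ hi₀ s hr hs
      rw [iprod_sub_right'] at h1
      have h2 := hmax i₀
      linarith
    · intro hs
      exact ⟨hs.1, fun i => hA k s hs i⟩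

lemma isClosed_CsetMM {S : Type*} {d T n : ℕ} (Emb : S → Vec d)
    (X : Fin n → Fin T → S) (p₀ : Vec d) : IsClosed (CsetMM Emb X p₀) := by
  have key : ∀ (r : ℝ) (a b : Vec d), IsClosed {p : Vec d | r ≤ iprod p a - iprod p b} :=
    fun r a b => isClosed_le continuous_const
      ((continuous_iprod_left' a).sub (continuous_iprod_left' b))
  have h1 : CsetMM Emb X p₀ =
      (⋂ (k) (s) (_ : s ∈ selSet Emb p₀ (X k)) (i),
        {p : Vec d | (0:ℝ) ≤ iprod p (Emb s) - iprod p (Emb (X k i))}) ∩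
      (⋂ (k) (s) (_ : s ∈ selSet Emb p₀ (X k)) (s') (_ : s' ∈ Set.range (X k))
        (_ : s' ∉ selSet Emb p₀ (X k)),
        {p : Vec d | (1:ℝ) ≤ iprod p (Emb s) - iprod p (Emb s')}) := by
    ext p
    simp only [CsetMM, Set.mem_setOf_eq, Set.mem_inter_iff, Set.mem_iInter]
    constructor
    · rintro ⟨hA, hB⟩
      refine ⟨fun k s hs i => by have := hA k s hs i; linarith, fun k s hs s' hr hns => ?_⟩
      have := hB k s hs s' hr hns
      rw [iprod_sub_right'] at this
      linarith
    · rintro ⟨hA, hB⟩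
      refine ⟨fun k s hs i => by have := hA k s hs i; linarith, fun k s hs s' hr hns => ?_⟩
      rw [iprod_sub_right']
      exact hB k s hs s' hr hns
  rw [h1]
  exact (isClosed_iInter fun k => isClosed_iInter fun s => isClosed_iInter fun _ =>
      isClosed_iInter fun i => key _ _ _).inter
    (isClosed_iInter fun k => isClosed_iInter fun s => isClosed_iInter fun _ =>
      isClosed_iInter fun s' => isClosed_iInter fun _ => isClosed_iInter fun _ => key _ _ _)

lemma convex_CsetMM {S : Type*} {d T n : ℕ} (Emb : S → Vec d)
    (X : Fin n → Fin T → S) (p₀ : Vec d) : Convex ℝ (CsetMM Emb X p₀) := by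
  rintro p ⟨hpA, hpB⟩ q ⟨hqA, hqB⟩ a b ha hb hab
  constructor
  · intro k s hs i
    rw [iprod_combo', iprod_combo']
    exact add_le_add (mul_le_mul_of_nonneg_left (hpA k s hs i) ha)
      (mul_le_mul_of_nonneg_left (hqA k s hs i) hb)
  · intro k s hs s' hr hns
    rw [iprod_combo']
    have h1 := hpB k s hs s' hr hns
    have h2 := hqB k s hs s' hr hns
    nlinarith

lemma nonempty_CsetMM {S : Type*} {d T n : ℕ} (hT : 0 < T) (Emb : S → Vec d)
    (X : Fin n → Fin T → S) (p₀ : Vec d) : (CsetMM Emb X p₀).Nonempty := by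
  set g : Fin n × Fin T × Fin T → ℝ := fun t =>
    iprod p₀ (Emb (X t.1 t.2.1)) - iprod p₀ (Emb (X t.1 t.2.2)) with hg
  set cond : Fin n × Fin T × Fin T → Prop := fun t =>
    X t.1 t.2.1 ∈ selSet Emb p₀ (X t.1) ∧ X t.1 t.2.2 ∉ selSet Emb p₀ (X t.1) with hcond
  have hgpos : ∀ t, cond t → 0 < g t := by
    rintro t ⟨h1, h2⟩
    have hr : X t.1 t.2.2 ∈ Set.range (X t.1) := ⟨t.2.2, rfl⟩
    have : ¬ ∀ i, iprod p₀ (Emb (X t.1 i)) ≤ iprod p₀ (Emb (X t.1 t.2.2)) := by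
      intro hrest; exact h2 ⟨hr, hrest⟩
    push_neg at this
    obtain ⟨i, hi⟩ := this
    have := h1.2 i
    simp only [hg]
    linarith
  set c : ℝ := 1 + ∑ t : Fin n × Fin T × Fin T, (if cond t then (g t)⁻¹ else 0) with hc
  have hterm : ∀ t : Fin n × Fin T × Fin T, 0 ≤ (if cond t then (g t)⁻¹ else 0) := by
    intro t
    by_cases h : cond t
    · rw [if_pos h]; exact (inv_pos.2 (hgpos t h)).le
    · rw [if_neg h]
  have hcpos : 0 < c := by
    have h := Finset.sum_nonneg (s := (Finset.univ : Finset (Fin n × Fin T × Fin T)))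
      (fun t _ => hterm t)
    simp only [hc]; linarith
  have hkey : ∀ t, cond t → 1 ≤ c * g t := by
    intro t ht
    have h1 : (g t)⁻¹ ≤ ∑ t' : Fin n × Fin T × Fin T, (if cond t' then (g t')⁻¹ else 0) := by
      have := Finset.single_le_sum (fun t' _ => hterm t') (Finset.mem_univ t)
      rwa [if_pos ht] at this
    have h2 : (g t)⁻¹ ≤ c := by simp only [hc]; linarith
    calc (1:ℝ) = (g t)⁻¹ * g t := (inv_mul_cancel₀ (hgpos t ht).ne').symm
      _ ≤ c * g t := mul_le_mul_of_nonneg_right h2 (hgpos t ht).le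
  refine ⟨c • p₀, fun k s hs i => ?_, fun k s hs s' hr hns => ?_⟩
  · rw [iprod_smul_left', iprod_smul_left']
    exact mul_le_mul_of_nonneg_left (hs.2 i) hcpos.le
  · obtain ⟨i, hi⟩ := hs.1
    obtain ⟨j, hj⟩ := hr
    have hcnd : cond (k, i, j) := by
      simp only [hcond]
      rw [hi, hj]
      exact ⟨hs, hns⟩
    have := hkey (k, i, j) hcnd
    simp only [hg] at this
    rw [hi, hj] at this
    rw [iprod_sub_right', iprod_smul_left', iprod_smul_left']
    linarith [this, mul_sub c (iprod p₀ (Emb s)) (iprod p₀ (Emb s'))]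

/-- for any `p₀ ≠ 0`, the max-margin problem associated with `p₀` is feasible
and has a unique solution. -/
theorem statement1 {S : Type*} (d T n : ℕ) (hd0 : 0 < d) (hT : 0 < T) (hn : 0 < n)
    (X : Fin n → Fin T → S) (Emb : S → Vec d)
    (p₀ : Vec d) (hp₀ : p₀ ≠ 0) :
    ∃! phat : Vec d, MaxMarginSol Emb X p₀ phat := by
  set K := CsetMM Emb X p₀ with hK
  have hne : K.Nonempty := nonempty_CsetMM hT Emb X p₀
  have hclosed : IsClosed K := isClosed_CsetMM Emb X p₀
  have hconv : Convex ℝ K := convex_CsetMM Emb X p₀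
  have hfeas : ∀ p : Vec d, MMFeasible Emb X p₀ p ↔ p ∈ K :=
    fun p => mmFeasible_iff_mem_CsetMM hT Emb X p₀ p
  obtain ⟨v, hvK, hv⟩ :=
    exists_norm_eq_iInf_of_complete_convex hne hclosed.isComplete hconv (0 : Vec d)
  have hmin : ∀ q ∈ K, ‖v‖ ≤ ‖q‖ := by
    intro q hq
    have h1 : ‖(0 : Vec d) - v‖ ≤ ‖(0 : Vec d) - q‖ := by
      rw [hv]
      exact ciInf_le ⟨0, by rintro x ⟨w, rfl⟩; exact norm_nonneg _⟩ (⟨q, hq⟩ : K)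
    simpa using h1
  have huniq : ∀ w ∈ K, ‖w‖ = ‖v‖ → w = v := by
    intro w hwK hnorm
    have hmid : ((1:ℝ)/2) • w + ((1:ℝ)/2) • v ∈ K :=
      hconv hwK hvK (by norm_num) (by norm_num) (by norm_num)
    have hmidn : ‖v‖ ≤ ‖((1:ℝ)/2) • w + ((1:ℝ)/2) • v‖ := hmin _ hmid
    have heq : ((1:ℝ)/2) • w + ((1:ℝ)/2) • v = ((1:ℝ)/2) • (w + v) := by
      rw [smul_add]
    rw [heq, norm_smul, Real.norm_eq_abs, show |(1:ℝ)/2| = 1/2 by norm_num] at hmidn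
    have hpar := parallelogram_law_with_norm ℝ w v
    have hwv : 2 * ‖v‖ ≤ ‖w + v‖ := by linarith
    have hsub : ‖w - v‖ = 0 := by
      nlinarith [norm_nonneg (w - v), norm_nonneg (w + v), norm_nonneg v, hnorm]
    exact sub_eq_zero.1 (norm_eq_zero.1 hsub)
  refine ⟨v, ⟨(hfeas v).2 hvK, fun q hq => hmin q ((hfeas q).1 hq)⟩, ?_⟩
  rintro w ⟨hwfeas, hwmin⟩
  have hwK : w ∈ K := (hfeas w).1 hwfeas
  have h1 : ‖w‖ ≤ ‖v‖ := hwmin v ((hfeas v).2 hvK)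
  have h2 : ‖v‖ ≤ ‖w‖ := hmin w hwK
  exact huniq w hwK (le_antisymm h1 h2)
end
end

section
/- For any vector p̂ ∈ ℝ^d, the directional derivative of the empirical logistic loss satisfies − p̂·∇_p L(E, p) = (1/n) Σ_{(X,y) ∈ D} g(X, y) Σ_{i=1}^T Σ_{j > i} (â_i(X) − â_j(X)) q_i(X) q_j(X) (γ_i(X, y) − γ_j(X, y)), where â_i(X) = p̂·E_{x_i}. -/
open MeasureTheory ProbabilityTheory Filter Topology
open scoped BigOperators ENNReal NNReal Classical

noncomputable section

variable {S : Type*}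

section Helpers

open Finset

lemma swap_sum' {T : ℕ} (G : Fin T → Fin T → ℝ) :
    ∑ i, ∑ j ∈ univ.filter (fun j => j < i), G i j
      = ∑ i, ∑ j ∈ univ.filter (fun j => i < j), G j i := by
  rw [Finset.sum_sigma', Finset.sum_sigma']
  exact Finset.sum_nbij' (fun x => ⟨x.2, x.1⟩) (fun x => ⟨x.2, x.1⟩)
    (by simp) (by simp) (by simp) (by simp) (by simp)

lemma sum_pairs' {T : ℕ} (G : Fin T → Fin T → ℝ) (hdiag : ∀ i, G i i = 0) :
    ∑ i, ∑ j, G i j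
      = ∑ i, ∑ j ∈ univ.filter (fun j => i < j), (G i j + G j i) := by
  have h1 : ∀ i : Fin T, ∑ j, G i j
      = ∑ j ∈ univ.filter (fun j => i < j), G i j
        + ∑ j ∈ univ.filter (fun j => j < i), G i j := by
    intro i
    rw [← Finset.sum_filter_add_sum_filter_not univ (fun j => i < j) (G i)]
    congr 1
    have : univ.filter (fun j => ¬ i < j) = insert i (univ.filter (fun j => j < i)) := by
      ext j; simp [not_lt, le_iff_lt_or_eq, or_comm, eq_comm]
    rw [this, Finset.sum_insert (by simp), hdiag]
    simp
  simp only [h1]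
  rw [Finset.sum_add_distrib, swap_sum' G, ← Finset.sum_add_distrib]
  exact Finset.sum_congr rfl fun i _ => (Finset.sum_add_distrib).symm

lemma alg_main' {T : ℕ} (w a c : Fin T → ℝ) :
    (∑ i, a i * w i * c i) * (∑ j, w j) - (∑ i, w i * c i) * (∑ j, a j * w j)
      = ∑ i, ∑ j ∈ univ.filter (fun j => i < j), (a i - a j) * w i * w j * (c i - c j) := by
  rw [Finset.sum_mul_sum, Finset.sum_mul_sum, ← Finset.sum_sub_distrib]
  simp only [← Finset.sum_sub_distrib]
  rw [sum_pairs' (fun i j => a i * w i * c i * w j - w i * c i * (a j * w j)) (fun i => by ring)]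
  exact Finset.sum_congr rfl fun i _ => Finset.sum_congr rfl fun j _ => by ring

lemma glemma' (t : ℝ) : Real.exp (-t) / (1 + Real.exp (-t)) = 1 / (1 + Real.exp t) := by
  rw [Real.exp_neg]
  have h1 : Real.exp t ≠ 0 := (Real.exp_pos t).ne'
  have h2 : (1 : ℝ) + Real.exp t ≠ 0 := by positivity
  have h3 : (1 : ℝ) + (Real.exp t)⁻¹ ≠ 0 := by positivity
  field_simp
  ring

lemma keyderiv' {S : Type*} {d T : ℕ} (hT : 0 < T) (Emb : S → Vec d) (v p phat : Vec d)
    (Xk : Fin T → S) (yk : ℝ) :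
    ∃ Lk : Vec d →L[ℝ] ℝ,
      HasFDerivAt (fun u : Vec d =>
        Real.log (1 + Real.exp (- yk *
          ((∑ i, Real.exp ((iprod (u) (Emb (Xk i)))) * (iprod (Emb (Xk i)) (v))) /
            ∑ j, Real.exp ((iprod (u) (Emb (Xk j)))))))) Lk p ∧
      Lk phat =
        (Real.exp (- yk * ((∑ i, Real.exp ((iprod (p) (Emb (Xk i)))) * (iprod (Emb (Xk i)) (v))) /
            ∑ j, Real.exp ((iprod (p) (Emb (Xk j)))))) * (- yk) /
          (1 + Real.exp (- yk * ((∑ i, Real.exp ((iprod (p) (Emb (Xk i)))) * (iprod (Emb (Xk i)) (v))) /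
            ∑ j, Real.exp ((iprod (p) (Emb (Xk j)))))))) *
        ((∑ i, Real.exp (iprod p (Emb (Xk i))) * iprod (Emb (Xk i)) v) *
            (-(((∑ j, Real.exp (iprod p (Emb (Xk j)))) ^ 2)⁻¹) *
              (∑ i, Real.exp (iprod p (Emb (Xk i))) * iprod phat (Emb (Xk i))))
          + (∑ j, Real.exp (iprod p (Emb (Xk j))))⁻¹ *
            (∑ i, Real.exp (iprod p (Emb (Xk i))) * iprod (Emb (Xk i)) v * iprod phat (Emb (Xk i)))) := by
  have hInner : ∀ e : Vec d, HasFDerivAt (fun u : Vec d => iprod u e) (innerSL ℝ e) p := by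
    intro e
    have : (fun u : Vec d => iprod u e) = fun u => innerSL ℝ e u := by
      funext u; rw [innerSL_apply_apply]; exact real_inner_comm e u
    rw [this]; exact (innerSL ℝ e).hasFDerivAt
  have hNum : HasFDerivAt (fun u : Vec d => ∑ i, Real.exp (iprod u (Emb (Xk i))) * iprod (Emb (Xk i)) v)
      (∑ i, (Real.exp (iprod p (Emb (Xk i))) * iprod (Emb (Xk i)) v) • innerSL ℝ (Emb (Xk i))) p := by
    apply HasFDerivAt.fun_sum
    intro i _
    have := ((Real.hasDerivAt_exp (iprod p (Emb (Xk i)))).comp_hasFDerivAt p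
      (hInner (Emb (Xk i)))).mul_const (iprod (Emb (Xk i)) v)
    convert this using 1
    · rfl
    · rfl
    · ext u; simp [mul_comm, mul_assoc, mul_left_comm]
  have hDen : HasFDerivAt (fun u : Vec d => ∑ j, Real.exp (iprod u (Emb (Xk j))))
      (∑ i, (Real.exp (iprod p (Emb (Xk i)))) • innerSL ℝ (Emb (Xk i))) p := by
    apply HasFDerivAt.fun_sum
    intro i _
    exact (Real.hasDerivAt_exp (iprod p (Emb (Xk i)))).comp_hasFDerivAt p (hInner (Emb (Xk i)))
  have hDpos : 0 < ∑ j, Real.exp (iprod p (Emb (Xk j))) :=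
    Finset.sum_pos (fun j _ => (Real.exp_pos _))
      (Finset.univ_nonempty_iff.mpr (Fin.pos_iff_nonempty.mp hT))
  have hInv : HasFDerivAt (fun u : Vec d => (∑ j, Real.exp (iprod u (Emb (Xk j))))⁻¹)
      ((-(((∑ j, Real.exp (iprod p (Emb (Xk j)))) ^ 2)⁻¹)) •
        (∑ i, (Real.exp (iprod p (Emb (Xk i)))) • innerSL ℝ (Emb (Xk i)))) p :=
    (hasDerivAt_inv hDpos.ne').comp_hasFDerivAt p hDen
  have hF := hNum.mul hInv
  set Fp := (∑ i, Real.exp (iprod p (Emb (Xk i))) * iprod (Emb (Xk i)) v) /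
      ∑ j, Real.exp (iprod p (Emb (Xk j))) with hFp
  have h1 : HasDerivAt (fun t : ℝ => - yk * t) (- yk) Fp := by
    simpa using (hasDerivAt_id Fp).const_mul (- yk)
  have h2 := (Real.hasDerivAt_exp (- yk * Fp)).comp Fp h1
  have h3 := h2.const_add 1
  have hpos : (0:ℝ) < 1 + Real.exp (- yk * Fp) := by positivity
  have h4 := (h3.log hpos.ne')
  have hcomp := h4.comp_hasFDerivAt p (by
    simpa only [div_eq_mul_inv, Pi.mul_def] using hF :
      HasFDerivAt (fun u : Vec d =>
        (∑ i, Real.exp (iprod u (Emb (Xk i))) * iprod (Emb (Xk i)) v) /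
          ∑ j, Real.exp (iprod u (Emb (Xk j)))) _ p)
  refine ⟨_, hcomp, ?_⟩
  simp only [ContinuousLinearMap.smul_apply, ContinuousLinearMap.add_apply,
    ContinuousLinearMap.sum_apply, ContinuousLinearMap.smul_apply, innerSL_apply_apply, smul_eq_mul, hFp]
  have hcomm : ∀ e : Vec d, (inner ℝ e phat : ℝ) = iprod phat e := fun e => real_inner_comm phat e
  simp only [hcomm, Function.comp_apply]

end Helpers

/-- the directional derivative of the loss along any `phat` satisfies
`-phat·∇_p L = (1/n) Σ_{(X,y)} g(X,y) Σ_i Σ_{j>i} (â_i - â_j) q_i q_j (γ_i - γ_j)`. -/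
theorem statement6 {S : Type*} (d T n : ℕ) (hd0 : 0 < d) (hT : 0 < T) (hn : 0 < n)
    (X : Fin n → Fin T → S) (y : Fin n → ℝ) (hy : ∀ k, y k = 1 ∨ y k = -1)
    (Emb : S → Vec d) (v p : Vec d) (hv : ‖v‖ = 1) (phat : Vec d) :
    -(iprod (phat) (gradP X y Emb v p)) =
      (1 / n : ℝ) * ∑ k, gfun Emb v p (X k) (y k) *
        ∑ i, ∑ j ∈ Finset.univ.filter (fun j => i < j),
          ((iprod (phat) (Emb (X k i))) - (iprod (phat) (Emb (X k j)))) *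
            qw Emb p (X k) i * qw Emb p (X k) j *
            (y k * (iprod (Emb (X k i)) (v)) - y k * (iprod (Emb (X k j)) (v))) := by
  classical
  -- derivative of each summand
  have hT' := hT
  choose L hL hLval using fun k => keyderiv' hT Emb v p phat (X k) (y k)
  -- derivative of the loss
  have hLoss : HasFDerivAt (fun u => lossL X y Emb v u) ((1 / n : ℝ) • ∑ k, L k) p := by
    have hsum : HasFDerivAt (fun u : Vec d =>
        ∑ k, Real.log (1 + Real.exp (- y k * fAttn Emb v u (X k)))) (∑ k, L k) p := by
      apply HasFDerivAt.fun_sum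
      intro k _
      exact hL k
    simpa only [lossL] using hsum.const_mul (1 / n : ℝ)
  have h0 : iprod phat (gradP X y Emb v p) = fderiv ℝ (fun u => lossL X y Emb v u) p phat := by
    rw [iprod, real_inner_comm, gradP, gradient, InnerProductSpace.toDual_symm_apply]
  rw [h0, hLoss.fderiv]
  simp only [ContinuousLinearMap.smul_apply, ContinuousLinearMap.sum_apply, smul_eq_mul]
  simp only [hLval]
  rw [neg_mul_eq_mul_neg, ← Finset.sum_neg_distrib]
  refine congrArg _ (Finset.sum_congr rfl fun k _ => ?_)
  simp only [gfun, qw, fAttn]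
  set w : Fin T → ℝ := fun i => Real.exp (iprod p (Emb (X k i))) with hw
  set a : Fin T → ℝ := fun i => iprod phat (Emb (X k i)) with ha
  set c : Fin T → ℝ := fun i => iprod (Emb (X k i)) v with hc
  have hDpos : 0 < ∑ j, w j :=
    Finset.sum_pos (fun j _ => (Real.exp_pos _))
      (Finset.univ_nonempty_iff.mpr (Fin.pos_iff_nonempty.mp hT))
  have hD0 : (∑ j, w j) ≠ 0 := hDpos.ne'
  have halg := alg_main' w a c
  have hsum1 : ∑ i, ∑ j ∈ Finset.univ.filter (fun j => i < j),
        (a i - a j) * (w i / ∑ j', w j') * (w j / ∑ j', w j') * (y k * c i - y k * c j)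
      = y k * ((∑ j', w j')⁻¹ * (∑ j', w j')⁻¹) *
          ∑ i, ∑ j ∈ Finset.univ.filter (fun j => i < j),
            (a i - a j) * w i * w j * (c i - c j) := by
    rw [Finset.mul_sum]
    refine Finset.sum_congr rfl fun i _ => ?_
    rw [Finset.mul_sum]
    refine Finset.sum_congr rfl fun j _ => ?_
    rw [div_eq_mul_inv, div_eq_mul_inv]
    ring
  rw [hsum1, ← halg]
  have h1p : (0:ℝ) < 1 + Real.exp (y k * ((∑ i, w i * c i) / ∑ j, w j)) := by positivity
  simp only [neg_mul, Real.exp_neg]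
  have e1 : ∑ i, Real.exp (iprod p (Emb (X k i))) * iprod phat (Emb (X k i))
      = ∑ j, a j * w j :=
    Finset.sum_congr rfl fun i _ => by simp only [ha, hw]; ring
  have e2 : ∑ i, Real.exp (iprod p (Emb (X k i))) * iprod (Emb (X k i)) v * iprod phat (Emb (X k i))
      = ∑ i, a i * w i * c i :=
    Finset.sum_congr rfl fun i _ => by simp only [ha, hw, hc]; ring
  rw [e1, e2]
  have h2p : (0:ℝ) < 1 + (Real.exp (y k * ((∑ i, w i * c i) / ∑ j, w j)))⁻¹ := by positivity
  field_simp
  ring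
end
end

section
/- Let p_t be a gradient-flow trajectory for L(E, ·) with ||p_t||_2 → ∞, and suppose there exists a nonzero vector p̂ such that for every ε > 0 there is a time t̄(ε) with − (p̂/||p̂||_2)·∇_p L(E, p_t) ≥ −(1 − ε) (p_t/||p_t||_2)·∇_p L(E, p_t) for all t ≥ t̄(ε). Then, if lim_{t → ∞} p_t / ||p_t||_2 exists, it equals p̂ / ||p̂||_2. -/
open MeasureTheory ProbabilityTheory Filter Topology
open scoped BigOperators ENNReal NNReal Classical

noncomputable section

variable {S : Type*}

lemma hasDerivAt_norm_traj {d : ℕ} {f : ℝ → Vec d} {D : Vec d} {t : ℝ}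
    (hf : HasDerivAt f D t) (hne : f t ≠ 0) :
    HasDerivAt (fun s => ‖f s‖) (inner ℝ (‖f t‖⁻¹ • f t : Vec d) D) t := by
  have h1 : HasDerivAt (fun s => (inner ℝ (f s) (f s) : ℝ))
      ((inner ℝ (f t) D : ℝ) + inner ℝ D (f t)) t := hf.inner ℝ hf
  have hnpos : (0:ℝ) < ‖f t‖ := norm_pos_iff.mpr hne
  have hpos : (0:ℝ) < inner ℝ (f t) (f t) := by
    rw [real_inner_self_eq_norm_mul_norm]; exact mul_pos hnpos hnpos
  have h2 := (Real.hasDerivAt_sqrt (ne_of_gt hpos)).comp t h1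
  have hfun : ((fun x => Real.sqrt x) ∘ fun s => (inner ℝ (f s) (f s) : ℝ)) = fun s => ‖f s‖ := by
    funext s
    rw [Function.comp_apply, real_inner_self_eq_norm_mul_norm,
      Real.sqrt_mul_self (norm_nonneg (f s))]
  rw [hfun] at h2
  refine h2.congr_deriv ?_
  have hsq : Real.sqrt (inner ℝ (f t) (f t) : ℝ) = ‖f t‖ := by
    rw [real_inner_self_eq_norm_mul_norm, Real.sqrt_mul_self (norm_nonneg _)]
  have hcomm : (inner ℝ D (f t) : ℝ) = inner ℝ (f t) D := real_inner_comm _ _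
  rw [real_inner_smul_left, hsq, hcomm]
  field_simp
  ring

lemma hasDerivAt_const_inner {d : ℕ} {f : ℝ → Vec d} {D : Vec d} {t : ℝ} (u : Vec d)
    (hf : HasDerivAt f D t) :
    HasDerivAt (fun s => (inner ℝ u (f s) : ℝ)) (inner ℝ u D : ℝ) t := by
  have := (hasDerivAt_const t u).inner ℝ hf
  simpa using this

/-- convergence lemma: if `‖p_t‖ → ∞` and the direction `phat` asymptotically
dominates the directional derivative along the trajectory, then the directional limit of the
gradient flow, if it exists, equals `phat / ‖phat‖`. -/
theorem statement7 {S : Type*} (d T n : ℕ) (hd0 : 0 < d) (hT : 0 < T) (hn : 0 < n)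
    (X : Fin n → Fin T → S) (y : Fin n → ℝ) (hy : ∀ k, y k = 1 ∨ y k = -1)
    (Emb : S → Vec d) (v : Vec d) (hv : ‖v‖ = 1)
    (ptraj : ℝ → Vec d) (hflow : GradFlow X y Emb v ptraj)
    (hnorm : Tendsto (fun t => ‖ptraj t‖) atTop atTop)
    (phat : Vec d) (hphat : phat ≠ 0)
    (hdir : ∀ ε : ℝ, 0 < ε → ∃ tbar : ℝ, ∀ t ≥ tbar,
      -(1 - ε) * (iprod ((‖ptraj t‖⁻¹ • ptraj t : Vec d)) (gradP X y Emb v (ptraj t))) ≤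
        -(iprod ((‖phat‖⁻¹ • phat : Vec d)) (gradP X y Emb v (ptraj t))))
    (q : Vec d)
    (hq : Tendsto (fun t => (‖ptraj t‖⁻¹ • ptraj t : Vec d)) atTop (𝓝 q)) :
    q = ‖phat‖⁻¹ • phat := by
  classical
  set u : Vec d := ‖phat‖⁻¹ • phat with hu_def
  have hphn : ‖phat‖ ≠ 0 := norm_ne_zero_iff.mpr hphat
  have hu : ‖u‖ = 1 := by
    rw [hu_def, norm_smul, norm_inv, norm_norm, inv_mul_cancel₀ hphn]
  have hqn : ‖q‖ = 1 := by
    have h2 : (fun t => ‖(‖ptraj t‖⁻¹ • ptraj t : Vec d)‖) =ᶠ[atTop] fun _ => (1:ℝ) := by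
      filter_upwards [hnorm.eventually_ge_atTop 1] with t ht
      have hn0 : ‖ptraj t‖ ≠ 0 := ne_of_gt (lt_of_lt_of_le one_pos ht)
      rw [norm_smul, norm_inv, norm_norm, inv_mul_cancel₀ hn0]
    exact tendsto_nhds_unique (hq.norm.congr' h2) tendsto_const_nhds
  have key : ∀ ε : ℝ, 0 < ε → 1 - ε ≤ (inner ℝ u q : ℝ) := by
    intro ε hε
    obtain ⟨tbar, htbar⟩ := hdir ε hε
    obtain ⟨T0, hT0⟩ := eventually_atTop.mp (hnorm.eventually_ge_atTop 1)
    set T1 := max tbar T0 with hT1def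
    have hne : ∀ t, T1 ≤ t → ptraj t ≠ 0 := by
      intro t ht h0
      have h1 := hT0 t (le_trans (le_max_right _ _) ht)
      rw [h0, norm_zero] at h1
      linarith
    have hder : ∀ t, T1 ≤ t →
        HasDerivAt (fun s => (inner ℝ u (ptraj s) : ℝ) - (1 - ε) * ‖ptraj s‖)
          ((inner ℝ u (-(gradP X y Emb v (ptraj t))) : ℝ)
            - (1 - ε) * inner ℝ (‖ptraj t‖⁻¹ • ptraj t : Vec d)
                (-(gradP X y Emb v (ptraj t)))) t := by
      intro t ht
      exact (hasDerivAt_const_inner u (hflow t)).sub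
        ((hasDerivAt_norm_traj (hflow t) (hne t ht)).const_mul (1 - ε))
    have hmono : MonotoneOn (fun s => (inner ℝ u (ptraj s) : ℝ) - (1 - ε) * ‖ptraj s‖)
        (Set.Ici T1) := by
      apply monotoneOn_of_deriv_nonneg (convex_Ici T1)
      · intro t ht
        exact ((hder t ht).continuousAt).continuousWithinAt
      · intro t ht
        rw [interior_Ici] at ht
        exact ((hder t ht.le).differentiableAt).differentiableWithinAt
      · intro t ht
        rw [interior_Ici] at ht
        rw [(hder t ht.le).deriv]
        have hd := htbar t (le_trans (le_max_left _ _) ht.le)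
        simp only [iprod] at hd
        rw [inner_neg_right, inner_neg_right]
        linarith
    set C : ℝ := (inner ℝ u (ptraj T1) : ℝ) - (1 - ε) * ‖ptraj T1‖ with hC
    have hbound : ∀ t, T1 ≤ t →
        1 - ε + C * ‖ptraj t‖⁻¹ ≤ (inner ℝ u (‖ptraj t‖⁻¹ • ptraj t : Vec d) : ℝ) := by
      intro t ht
      have hm := hmono Set.self_mem_Ici (Set.mem_Ici.mpr ht) ht
      have hge1 : 1 ≤ ‖ptraj t‖ := hT0 t (le_trans (le_max_right _ _) ht)
      have hpos : (0:ℝ) < ‖ptraj t‖ := lt_of_lt_of_le one_pos hge1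
      rw [real_inner_smul_right]
      have h3 : (1 - ε) * ‖ptraj t‖ + C ≤ (inner ℝ u (ptraj t) : ℝ) := by
        simp only [hC] at hm ⊢
        linarith
      have h4 := mul_le_mul_of_nonneg_left h3 (inv_nonneg.mpr hpos.le)
      have h5 : ‖ptraj t‖⁻¹ * ((1 - ε) * ‖ptraj t‖ + C) = 1 - ε + C * ‖ptraj t‖⁻¹ := by
        field_simp
      rw [h5] at h4
      exact h4
    have hL : Tendsto (fun t => (inner ℝ u (‖ptraj t‖⁻¹ • ptraj t : Vec d) : ℝ)) atTop
        (𝓝 (inner ℝ u q : ℝ)) := tendsto_const_nhds.inner hq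
    have hR : Tendsto (fun t => 1 - ε + C * ‖ptraj t‖⁻¹) atTop (𝓝 (1 - ε)) := by
      have hinv : Tendsto (fun t => ‖ptraj t‖⁻¹) atTop (𝓝 0) := hnorm.inv_tendsto_atTop
      have h6 : Tendsto (fun t => 1 - ε + C * ‖ptraj t‖⁻¹) atTop (𝓝 (1 - ε + C * 0)) :=
        tendsto_const_nhds.add (tendsto_const_nhds.mul hinv)
      simpa using h6
    refine le_of_tendsto_of_tendsto hR hL ?_
    filter_upwards [eventually_ge_atTop T1] with t ht using hbound t ht
  have h1le : (1:ℝ) ≤ inner ℝ u q := by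
    by_contra h
    push_neg at h
    have hε : (0:ℝ) < (1 - inner ℝ u q) / 2 := by linarith
    have hk := key _ hε
    linarith
  have hle : (inner ℝ u q : ℝ) ≤ 1 := by
    have h7 := real_inner_le_norm u q
    rw [hu, hqn] at h7
    simpa using h7
  have heq : (inner ℝ u q : ℝ) = ‖u‖ * ‖q‖ := by
    rw [hu, hqn]
    linarith
  have h8 := inner_eq_norm_mul_iff_real.mp heq
  rw [hu, hqn, one_smul, one_smul] at h8
  exact h8.symm
end
end

section
/- Let p̄ be a unit-norm vector and p = R p̄ for a positive constant R. Suppose p̄ is a locally optimal direction with constant μ > 0 independent of R, and suppose there exists a constant τ1 > 0 (possibly depending on p̄, η0, n, T, d but not on R) such that for every sequence X: p̄·(E_s − E_{s'}) ≥ τ1 for all s ∈ S_X(p), s' ∈ S²_X(p), and p̄·(E_s − E_{s'}) ≥ τ1 for all s ∈ S²_X(p), s' ∈ S^<_X(p). Then, for any ε > 0 and any p̂ with p̂ ≈ p, ||p̂||_2 independent of R, and p̂·(E_s − E_{s'}) ≥ τ2 > 0 for all s ∈ S_X(p̂), s' ∈ X \ S_X(p̂) and all X, there exists R large enough such that −p̂·∇_p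 L(E^1, p) ≤ (1 + ε) A and −p̂·∇_p L(E^1, p) ≥ (1 − ε) A, where A = (1/n) Σ_{(X,y) ∈ D} Σ_{i ∈ S_X(p)} Σ_{j ∈ S²_X(p)} (â_i(X) − â_j(X)) h_{i,j}(X, y, p), with â_i(X) = p̂·E_{x_i} and h_{i,j}(X, y, p) = g(X, y) q_i(X) q_j(X) (γ_i(X, y) − γ_j(X, y)). -/
open MeasureTheory ProbabilityTheory Filter Topology
open scoped BigOperators ENNReal NNReal Classical

noncomputable section

variable {S : Type*}

/-- The quantity
`A = (1/n) Σ_{(X,y)} Σ_{i ∈ S_X(p)} Σ_{j ∈ S²_X(p)} (â_i(X) - â_j(X)) h_{i,j}(X, y, p)`,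
where `â_i(X) = phat·E_{x_i}` and `h_{i,j}(X,y,p) = g(X,y) q_i(X) q_j(X) (γ_i - γ_j)`. -/
def domTerm {S : Type*} {d T n : ℕ} (Emb : S → Vec d) (v : Vec d)
    (X : Fin n → Fin T → S) (y : Fin n → ℝ) (p phat : Vec d) : ℝ :=
  (1 / n : ℝ) * ∑ k,
    ∑ i ∈ Finset.univ.filter (fun i => X k i ∈ selSet Emb p (X k)),
      ∑ j ∈ Finset.univ.filter (fun j => X k j ∈ sel2Set Emb p (X k)),
        ((iprod (phat) (Emb (X k i))) - (iprod (phat) (Emb (X k j)))) *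
          (gfun Emb v p (X k) (y k) * qw Emb p (X k) i * qw Emb p (X k) j *
            (y k * (iprod (Emb (X k i)) (v)) - y k * (iprod (Emb (X k j)) (v))))


/-! ### Auxiliary lemmas for statement14 -/

section Statement14Aux

open InnerProductSpace
set_option maxHeartbeats 1000000

set_option maxHeartbeats 1000000 in
lemma sum_pair_expand {T : ℕ} (q a g : Fin T → ℝ) :
    ∑ i, ∑ j, q i * q j * a i * (g i - g j) =
      (∑ i, q i * a i * g i) * (∑ j, q j) - (∑ i, q i * a i) * (∑ j, q j * g j) := by
  rw [Finset.sum_mul_sum, Finset.sum_mul_sum, ← Finset.sum_sub_distrib]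
  refine Finset.sum_congr rfl fun i _ => ?_
  rw [← Finset.sum_sub_distrib]
  exact Finset.sum_congr rfl fun j _ => by ring

lemma hasFDerivAt_iprod {d : ℕ} (e p : Vec d) :
    HasFDerivAt (fun u : Vec d => iprod u e) (innerSL ℝ e) p := by
  have h : (fun u : Vec d => iprod u e) = fun u => (innerSL ℝ e) u := by
    funext u; simp only [innerSL_apply_apply, iprod]; exact real_inner_comm e u
  rw [h]; exact (innerSL ℝ e).hasFDerivAt

lemma hasFDerivAt_expip {d : ℕ} (e p : Vec d) :
    HasFDerivAt (fun u : Vec d => Real.exp (iprod u e))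
      (Real.exp (iprod p e) • innerSL ℝ e) p :=
  (hasFDerivAt_iprod e p).exp

/-- derivative CLM of `fAttn` in `p`. -/
def fAttnD {d T : ℕ} (Emb : S → Vec d) (v p : Vec d) (Z : Fin T → S) : Vec d →L[ℝ] ℝ :=
  (∑ i, Real.exp (iprod p (Emb (Z i))) * iprod (Emb (Z i)) v) •
      ((-(((∑ j, Real.exp (iprod p (Emb (Z j)))) ^ 2)⁻¹) •
        ∑ i, Real.exp (iprod p (Emb (Z i))) • innerSL ℝ (Emb (Z i))))
    + (∑ j, Real.exp (iprod p (Emb (Z j))))⁻¹ •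
        ∑ i, (iprod (Emb (Z i)) v) • (Real.exp (iprod p (Emb (Z i))) • innerSL ℝ (Emb (Z i)))

lemma sumExp_pos {d T : ℕ} (hT : 0 < T) (Emb : S → Vec d) (p : Vec d) (Z : Fin T → S) :
    0 < ∑ j, Real.exp (iprod p (Emb (Z j))) := by
  haveI : Nonempty (Fin T) := Fin.pos_iff_nonempty.mp hT
  exact Finset.sum_pos (fun j _ => Real.exp_pos _) Finset.univ_nonempty

lemma hasFDerivAt_fAttn {d T : ℕ} (hT : 0 < T) (Emb : S → Vec d) (v : Vec d)
    (Z : Fin T → S) (p : Vec d) :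
    HasFDerivAt (fun u => fAttn Emb v u Z) (fAttnD Emb v p Z) p := by
  have hD := sumExp_pos hT Emb p Z
  have hN : HasFDerivAt (fun u : Vec d => ∑ i, Real.exp (iprod u (Emb (Z i))) * iprod (Emb (Z i)) v)
      (∑ i, (iprod (Emb (Z i)) v) • (Real.exp (iprod p (Emb (Z i))) • innerSL ℝ (Emb (Z i)))) p :=
    HasFDerivAt.fun_sum fun i _ => (hasFDerivAt_expip _ p).mul_const _
  have hDf : HasFDerivAt (fun u : Vec d => ∑ j, Real.exp (iprod u (Emb (Z j))))
      (∑ i, Real.exp (iprod p (Emb (Z i))) • innerSL ℝ (Emb (Z i))) p :=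
    HasFDerivAt.fun_sum fun i _ => hasFDerivAt_expip _ p
  have hinv := (hasDerivAt_inv hD.ne').comp_hasFDerivAt p hDf
  have h := hN.mul hinv
  have hfe : (fun u => fAttn Emb v u Z) =
      fun u => (∑ i, Real.exp (iprod u (Emb (Z i))) * iprod (Emb (Z i)) v) *
        (∑ j, Real.exp (iprod u (Emb (Z j))))⁻¹ := by
    funext u; rw [fAttn, div_eq_mul_inv]
  rw [hfe, fAttnD]
  exact h

def lossD {d T n : ℕ} (X : Fin n → Fin T → S) (y : Fin n → ℝ)
    (Emb : S → Vec d) (v p : Vec d) : Vec d →L[ℝ] ℝ :=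
  (1 / n : ℝ) • ∑ k, ((1 + Real.exp (- y k * fAttn Emb v p (X k)))⁻¹ •
    (Real.exp (- y k * fAttn Emb v p (X k)) • ((- y k) • fAttnD Emb v p (X k))))

lemma hasFDerivAt_lossL {d T n : ℕ} (hT : 0 < T) (X : Fin n → Fin T → S) (y : Fin n → ℝ)
    (Emb : S → Vec d) (v p : Vec d) :
    HasFDerivAt (fun u => lossL X y Emb v u) (lossD X y Emb v p) p := by
  have hk : ∀ k, HasFDerivAt (fun u => Real.log (1 + Real.exp (- y k * fAttn Emb v u (X k))))
      ((1 + Real.exp (- y k * fAttn Emb v p (X k)))⁻¹ •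
        (Real.exp (- y k * fAttn Emb v p (X k)) • ((- y k) • fAttnD Emb v p (X k)))) p := by
    intro k
    have h1 : (0:ℝ) < 1 + Real.exp (- y k * fAttn Emb v p (X k)) := by positivity
    exact ((((hasFDerivAt_fAttn hT Emb v (X k) p).const_mul (- y k)).exp.const_add 1).log h1.ne')
  exact (HasFDerivAt.fun_sum (fun k (_ : k ∈ Finset.univ) => hk k)).const_mul (1/n : ℝ)

lemma iprod_gradP_eq {d T n : ℕ} (hT : 0 < T) (X : Fin n → Fin T → S) (y : Fin n → ℝ)
    (Emb : S → Vec d) (v p phat : Vec d) :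
    iprod phat (gradP X y Emb v p) = lossD X y Emb v p phat := by
  rw [gradP, gradient, (hasFDerivAt_lossL hT X y Emb v p).fderiv, iprod, real_inner_comm]
  exact InnerProductSpace.toDual_symm_apply


lemma gshift (a : ℝ) : (1 + Real.exp (-a))⁻¹ * Real.exp (-a) = (1 + Real.exp a)⁻¹ := by
  rw [Real.exp_neg]
  have h1 := Real.exp_pos a
  have h2 : (0:ℝ) < 1 + Real.exp a := by positivity
  have h3 : (0:ℝ) < 1 + (Real.exp a)⁻¹ := by positivity
  field_simp
  ring

lemma fAttnD_apply {d T : ℕ} (Emb : S → Vec d) (v p : Vec d) (Z : Fin T → S) (phat : Vec d) :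
    fAttnD Emb v p Z phat =
      (∑ i, Real.exp (iprod p (Emb (Z i))) * iprod (Emb (Z i)) v) *
          (-(((∑ j, Real.exp (iprod p (Emb (Z j)))) ^ 2)⁻¹) *
            ∑ i, Real.exp (iprod p (Emb (Z i))) * iprod phat (Emb (Z i)))
        + (∑ j, Real.exp (iprod p (Emb (Z j))))⁻¹ *
            ∑ i, (iprod (Emb (Z i)) v) * (Real.exp (iprod p (Emb (Z i))) * iprod phat (Emb (Z i))) := by
  simp only [fAttnD, ContinuousLinearMap.add_apply, ContinuousLinearMap.smul_apply,
    ContinuousLinearMap.sum_apply, innerSL_apply_apply, smul_eq_mul]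
  simp only [iprod, real_inner_comm phat]

lemma lossD_apply {d T n : ℕ} (hT : 0 < T) (X : Fin n → Fin T → S) (y : Fin n → ℝ)
    (Emb : S → Vec d) (v p phat : Vec d) :
    lossD X y Emb v p phat = (1 / n : ℝ) * ∑ k, ((- y k) * gfun Emb v p (X k) (y k)) *
      ((∑ i, qw Emb p (X k) i * (iprod (Emb (X k i)) v) * (iprod phat (Emb (X k i)))) -
        fAttn Emb v p (X k) * ∑ i, qw Emb p (X k) i * (iprod phat (Emb (X k i)))) := by
  simp only [lossD, ContinuousLinearMap.smul_apply, ContinuousLinearMap.sum_apply, smul_eq_mul]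
  refine congrArg _ (Finset.sum_congr rfl fun k _ => ?_)
  rw [fAttnD_apply]
  have hD := sumExp_pos hT Emb p (X k)
  have e1 : ∑ i, qw Emb p (X k) i * (iprod (Emb (X k i)) v) * (iprod phat (Emb (X k i))) =
      (∑ i, (iprod (Emb (X k i)) v) * (Real.exp (iprod p (Emb (X k i))) * iprod phat (Emb (X k i)))) /
        (∑ j, Real.exp (iprod p (Emb (X k j)))) := by
    rw [Finset.sum_div]
    exact Finset.sum_congr rfl fun i _ => by rw [qw]; ring
  have e2 : ∑ i, qw Emb p (X k) i * (iprod phat (Emb (X k i))) =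
      (∑ i, Real.exp (iprod p (Emb (X k i))) * iprod phat (Emb (X k i))) /
        (∑ j, Real.exp (iprod p (Emb (X k j)))) := by
    rw [Finset.sum_div]
    exact Finset.sum_congr rfl fun i _ => by rw [qw]; ring
  rw [e1, e2, gfun]
  set F := fAttn Emb v p (X k) with hFdef
  have hF : F = (∑ i, Real.exp (iprod p (Emb (X k i))) * iprod (Emb (X k i)) v) /
      (∑ j, Real.exp (iprod p (Emb (X k j)))) := by rw [hFdef, fAttn]
  have hE : Real.exp (- y k * F) = (Real.exp (y k * F))⁻¹ := by
    rw [neg_mul, Real.exp_neg]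
  rw [hE, hF]
  have hEp := Real.exp_pos (y k * F)
  rw [hF] at hEp
  set E := Real.exp (y k * ((∑ i, Real.exp (iprod p (Emb (X k i))) * iprod (Emb (X k i)) v) /
      (∑ j, Real.exp (iprod p (Emb (X k j)))))) with hEdef
  have h1 : (0:ℝ) < 1 + E := by positivity
  have h2 : (0:ℝ) < 1 + E⁻¹ := by positivity
  field_simp
  ring

section lemmas
variable {d T : ℕ} (Emb : S → Vec d) (v p : Vec d) (Z : Fin T → S)

lemma sumExp_pos' (hT : 0 < T) : 0 < ∑ j, Real.exp (iprod p (Emb (Z j))) := by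
  haveI : Nonempty (Fin T) := Fin.pos_iff_nonempty.mp hT
  exact Finset.sum_pos (fun j _ => Real.exp_pos _) Finset.univ_nonempty

lemma qw_pos (hT : 0 < T) (i : Fin T) : 0 < qw Emb p Z i :=
  div_pos (Real.exp_pos _) (sumExp_pos' Emb p Z hT)

lemma qw_le_one (hT : 0 < T) (i : Fin T) : qw Emb p Z i ≤ 1 := by
  rw [qw, div_le_one (sumExp_pos' Emb p Z hT)]
  exact Finset.single_le_sum (f := fun j => Real.exp (iprod p (Emb (Z j))))
    (fun j _ => (Real.exp_pos _).le) (Finset.mem_univ i)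

lemma qw_sum_one (hT : 0 < T) : ∑ i, qw Emb p Z i = 1 := by
  simp only [qw]
  rw [← Finset.sum_div, div_self (sumExp_pos' Emb p Z hT).ne']

lemma fAttn_eq_sum (hT : 0 < T) :
    fAttn Emb v p Z = ∑ i, qw Emb p Z i * iprod (Emb (Z i)) v := by
  rw [fAttn, Finset.sum_div]
  exact Finset.sum_congr rfl fun i _ => by rw [qw]; ring

lemma qw_ratio (hT : 0 < T) (i j : Fin T) :
    qw Emb p Z i = qw Emb p Z j * Real.exp (iprod p (Emb (Z i)) - iprod p (Emb (Z j))) := by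
  have hD := (sumExp_pos' Emb p Z hT).ne'
  have h1 := (Real.exp_pos (iprod p (Emb (Z j)))).ne'
  rw [qw, qw, Real.exp_sub]
  field_simp

lemma qw_eq_of_eq (hT : 0 < T) {i j : Fin T}
    (h : iprod p (Emb (Z i)) = iprod p (Emb (Z j))) : qw Emb p Z i = qw Emb p Z j := by
  rw [qw_ratio Emb p Z hT i j, h, sub_self, Real.exp_zero, mul_one]

lemma fAttn_abs_le (hT : 0 < T) (B : ℝ) (hB : ∀ i, |iprod (Emb (Z i)) v| ≤ B) :
    |fAttn Emb v p Z| ≤ B := by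
  rw [fAttn_eq_sum Emb v p Z hT]
  calc |∑ i, qw Emb p Z i * iprod (Emb (Z i)) v| ≤ ∑ i, |qw Emb p Z i * iprod (Emb (Z i)) v| :=
        Finset.abs_sum_le_sum_abs _ _
    _ ≤ ∑ i, qw Emb p Z i * B := by
        refine Finset.sum_le_sum fun i _ => ?_
        rw [abs_mul, abs_of_pos (qw_pos Emb p Z hT i)]
        exact mul_le_mul_of_nonneg_left (hB i) (qw_pos Emb p Z hT i).le
    _ = B := by rw [← Finset.sum_mul, qw_sum_one Emb p Z hT, one_mul]

lemma gfun_pos (yv : ℝ) : 0 < gfun Emb v p Z yv := by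
  rw [gfun]; positivity

lemma gfun_le_one (yv : ℝ) : gfun Emb v p Z yv ≤ 1 := by
  rw [gfun, div_le_one (by positivity)]
  nlinarith [Real.exp_pos (yv * fAttn Emb v p Z)]

lemma gfun_ge (yv B : ℝ) (h : yv * fAttn Emb v p Z ≤ B) :
    (1 + Real.exp B)⁻¹ ≤ gfun Emb v p Z yv := by
  rw [gfun, one_div]
  exact inv_anti₀ (by positivity) (by simp [Real.exp_le_exp.mpr h])

lemma iprod_smul {d : ℕ} (R : ℝ) (x y : Vec d) : iprod (R • x) y = R * iprod x y :=
  real_inner_smul_left x y R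

lemma selSet_smul {R : ℝ} (hR : 0 < R) (pbar : Vec d) :
    selSet Emb (R • pbar) Z = selSet Emb pbar Z := by
  ext s
  simp only [selSet, Set.mem_setOf_eq, iprod_smul]
  exact and_congr_right fun _ => forall_congr' fun i => by
    constructor
    · intro h; exact le_of_mul_le_mul_left h hR
    · intro h; exact mul_le_mul_of_nonneg_left h hR.le

lemma sel2Set_smul {R : ℝ} (hR : 0 < R) (pbar : Vec d) :
    sel2Set Emb (R • pbar) Z = sel2Set Emb pbar Z := by
  ext s
  simp only [sel2Set, Set.mem_setOf_eq, selSet_smul Emb Z hR, iprod_smul]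
  refine and_congr_right fun _ => and_congr_right fun _ => ?_
  refine forall_congr' fun s' => forall_congr' fun _ => forall_congr' fun _ => ?_
  constructor
  · intro h; exact le_of_mul_le_mul_left h hR
  · intro h; exact mul_le_mul_of_nonneg_left h hR.le

lemma selSet_inner_eq {s s' : S} (hs : s ∈ selSet Emb p Z) (hs' : s' ∈ selSet Emb p Z) :
    iprod p (Emb s) = iprod p (Emb s') := by
  obtain ⟨⟨i, hi⟩, h1⟩ := hs
  obtain ⟨⟨j, hj⟩, h2⟩ := hs'
  refine le_antisymm ?_ ?_
  · rw [← hi]; exact h2 i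
  · rw [← hj]; exact h1 j

lemma sel2Set_inner_eq {s s' : S} (hs : s ∈ sel2Set Emb p Z) (hs' : s' ∈ sel2Set Emb p Z) :
    iprod p (Emb s) = iprod p (Emb s') := by
  obtain ⟨hr, hn, h1⟩ := hs
  obtain ⟨hr', hn', h2⟩ := hs'
  exact le_antisymm (h2 s hr hn) (h1 s' hr' hn')

lemma exists_mem_selSet (hT : 0 < T) : ∃ i, Z i ∈ selSet Emb p Z := by
  haveI : Nonempty (Fin T) := Fin.pos_iff_nonempty.mp hT
  obtain ⟨i, -, hi⟩ := Finset.exists_max_image Finset.univ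
    (fun i => iprod p (Emb (Z i))) Finset.univ_nonempty
  exact ⟨i, ⟨i, rfl⟩, fun j => hi j (Finset.mem_univ j)⟩

lemma exists_mem_sel2Set (hT : 0 < T) {i0 : Fin T} (h0 : Z i0 ∉ selSet Emb p Z) :
    ∃ j, Z j ∈ sel2Set Emb p Z := by
  have hne : (Finset.univ.filter (fun j => Z j ∉ selSet Emb p Z)).Nonempty :=
    ⟨i0, by simp [h0]⟩
  obtain ⟨j, hj, hmax⟩ := Finset.exists_max_image _ (fun i => iprod p (Emb (Z i))) hne
  rw [Finset.mem_filter] at hj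
  refine ⟨j, ⟨j, rfl⟩, hj.2, fun s' hs' hsn => ?_⟩
  obtain ⟨j', hj'⟩ := hs'
  rw [← hj']
  exact hmax j' (Finset.mem_filter.mpr ⟨Finset.mem_univ j', by rw [hj']; exact hsn⟩)

lemma mem_selLtSet_of (hT : 0 < T) {i : Fin T} (h1 : Z i ∉ selSet Emb p Z)
    (h2 : Z i ∉ sel2Set Emb p Z) : Z i ∈ selLtSet Emb p Z :=
  ⟨⟨i, rfl⟩, fun h => h.elim h1 h2⟩
end lemmas

lemma sum_sub_self {α : Type*} (s : Finset α) (f : α → ℝ) :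
    ∑ i ∈ s, ∑ j ∈ s, (f i - f j) = 0 := by
  simp only [Finset.sum_sub_distrib, Finset.sum_const, Finset.smul_sum, smul_eq_mul,
    Finset.sum_smul]
  ring

lemma core {T : ℕ} (hT : 0 < T) (Sel Sel2 Lt : Finset (Fin T))
    (q ah γ : Fin T → ℝ) (g gm E τ2 μ : ℝ)
    (htri : ∀ i, i ∈ Sel ∨ i ∈ Sel2 ∨ i ∈ Lt)
    (hd21 : ∀ i ∈ Sel2, i ∉ Sel)
    (hdL1 : ∀ i ∈ Lt, i ∉ Sel) (hdL2 : ∀ i ∈ Lt, i ∉ Sel2)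
    (hqpos : ∀ i, 0 < q i) (hqle1 : ∀ i, q i ≤ 1)
    (hg0 : 0 < g) (hg1 : g ≤ 1) (hgm : 0 < gm) (hgmin : gm ≤ g)
    (i0 : Fin T) (hi0 : i0 ∈ Sel) (j0 : Fin T) (hj0 : j0 ∈ Sel2)
    (hqSel : ∀ i ∈ Sel, q i = q i0) (hqSel2 : ∀ j ∈ Sel2, q j = q j0)
    (hahSel : ∀ i ∈ Sel, ah i = ah i0)
    (hq1T : 1 / (T : ℝ) ≤ q i0)
    (hq2E : q j0 ≤ E) (hqLt : ∀ l ∈ Lt, q l ≤ q j0 * E)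
    (hτ2 : 0 < τ2) (hμ : 0 < μ)
    (hgap3 : ∀ j ∈ Sel2, ah j + τ2 ≤ ah i0)
    (hloc : ∀ j ∈ Sel2, μ ≤ ∑ i ∈ Sel, (γ i - γ j)) :
    gm * (τ2 * μ / T) * q j0 ≤
        ∑ i ∈ Sel, ∑ j ∈ Sel2, (ah i - ah j) * (g * q i * q j * (γ i - γ j)) ∧
    |g * (∑ i, ∑ j, q i * q j * ah i * (γ i - γ j)) -
        ∑ i ∈ Sel, ∑ j ∈ Sel2, (ah i - ah j) * (g * q i * q j * (γ i - γ j))| ≤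
      (6 * ∑ i, ∑ j, |ah i * (γ i - γ j)|) * E * q j0 := by
  have hEpos : 0 < E := lt_of_lt_of_le (hqpos j0) hq2E
  set t : Fin T → Fin T → ℝ := fun i j => q i * q j * ah i * (γ i - γ j) with ht
  set Ck : ℝ := ∑ i, ∑ j, |ah i * (γ i - γ j)| with hCk
  have hCk0 : 0 ≤ Ck := Finset.sum_nonneg fun i _ => Finset.sum_nonneg fun j _ => abs_nonneg _
  -- partition of sums over univ
  have hdisj12 : Disjoint Sel Sel2 := Finset.disjoint_left.mpr fun a ha hb => hd21 a hb ha
  have hdisjUL : Disjoint (Sel ∪ Sel2) Lt := Finset.disjoint_left.mpr fun a ha hb => by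
    rcases Finset.mem_union.mp ha with h | h
    · exact hdL1 a hb h
    · exact hdL2 a hb h
  have hunion : (Sel ∪ Sel2) ∪ Lt = Finset.univ := by
    ext i
    simp only [Finset.mem_union, Finset.mem_univ, iff_true]
    rcases htri i with h | h | h
    · exact Or.inl (Or.inl h)
    · exact Or.inl (Or.inr h)
    · exact Or.inr h
  have huniv : ∀ f : Fin T → ℝ, ∑ i, f i =
      ∑ i ∈ Sel, f i + ∑ i ∈ Sel2, f i + ∑ i ∈ Lt, f i := by
    intro f
    rw [← hunion, Finset.sum_union hdisjUL, Finset.sum_union hdisj12]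
  -- block decomposition
  have hW : ∑ i, ∑ j, t i j =
      ((∑ i ∈ Sel, ∑ j ∈ Sel, t i j + ∑ i ∈ Sel, ∑ j ∈ Sel2, t i j + ∑ i ∈ Sel, ∑ j ∈ Lt, t i j)
      + (∑ i ∈ Sel2, ∑ j ∈ Sel, t i j + ∑ i ∈ Sel2, ∑ j ∈ Sel2, t i j
          + ∑ i ∈ Sel2, ∑ j ∈ Lt, t i j))
      + (∑ i ∈ Lt, ∑ j ∈ Sel, t i j + ∑ i ∈ Lt, ∑ j ∈ Sel2, t i j
          + ∑ i ∈ Lt, ∑ j ∈ Lt, t i j) := by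
    rw [huniv (fun i => ∑ j, t i j)]
    rw [Finset.sum_congr rfl (fun i _ => huniv (t i)),
        Finset.sum_congr (rfl : Sel2 = Sel2) (fun i _ => huniv (t i)),
        Finset.sum_congr (rfl : Lt = Lt) (fun i _ => huniv (t i))]
    simp only [Finset.sum_add_distrib]
  -- Sel × Sel block is zero
  have hSS : ∑ i ∈ Sel, ∑ j ∈ Sel, t i j = 0 := by
    have h1 : ∑ i ∈ Sel, ∑ j ∈ Sel, t i j =
        (q i0 * q i0 * ah i0) * ∑ i ∈ Sel, ∑ j ∈ Sel, (γ i - γ j) := by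
      rw [Finset.mul_sum]
      refine Finset.sum_congr rfl fun i hi => ?_
      rw [Finset.mul_sum]
      refine Finset.sum_congr rfl fun j hj => ?_
      simp only [ht]
      rw [hqSel i hi, hqSel j hj, hahSel i hi]
    rw [h1, sum_sub_self, mul_zero]
  -- A-term
  have hA2 : ∑ i ∈ Sel, ∑ j ∈ Sel2, (ah i - ah j) * (g * q i * q j * (γ i - γ j)) =
      g * (∑ i ∈ Sel, ∑ j ∈ Sel2, t i j + ∑ i ∈ Sel2, ∑ j ∈ Sel, t i j) := by
    rw [Finset.sum_comm (s := Sel2) (t := Sel) (f := fun i j => t i j)]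
    rw [← Finset.sum_add_distrib, Finset.mul_sum]
    refine Finset.sum_congr rfl fun i _ => ?_
    rw [← Finset.sum_add_distrib, Finset.mul_sum]
    refine Finset.sum_congr rfl fun j _ => ?_
    simp only [ht]
    ring
  -- bad-pair bound
  have hqj0pos := hqpos j0
  have hbadSel2 : ∀ j ∈ Sel2, q j ≤ E := fun j hj => (hqSel2 j hj).le.trans hq2E
  have hbadLt : ∀ l ∈ Lt, q l ≤ E := fun l hl =>
    (hqLt l hl).trans (by nlinarith [hqle1 j0, hEpos])
  -- block bound
  have hblock : ∀ P Q : Finset (Fin T), (∀ i ∈ P, ∀ j ∈ Q, q i * q j ≤ q j0 * E) →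
      |∑ i ∈ P, ∑ j ∈ Q, t i j| ≤ q j0 * E * Ck := by
    intro P Q hPQ
    have h1 : |∑ i ∈ P, ∑ j ∈ Q, t i j| ≤ ∑ i ∈ P, ∑ j ∈ Q, |t i j| :=
      (Finset.abs_sum_le_sum_abs _ _).trans
        (Finset.sum_le_sum fun i _ => Finset.abs_sum_le_sum_abs _ _)
    have h2 : ∀ i ∈ P, ∀ j ∈ Q, |t i j| ≤ (q j0 * E) * |ah i * (γ i - γ j)| := by
      intro i hi j hj
      have : t i j = (q i * q j) * (ah i * (γ i - γ j)) := by simp only [ht]; ring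
      rw [this, abs_mul, abs_of_pos (mul_pos (hqpos i) (hqpos j))]
      exact mul_le_mul_of_nonneg_right (hPQ i hi j hj) (abs_nonneg _)
    have h3 : ∑ i ∈ P, ∑ j ∈ Q, |t i j| ≤ ∑ i ∈ P, ∑ j ∈ Q, (q j0 * E) * |ah i * (γ i - γ j)| :=
      Finset.sum_le_sum fun i hi => Finset.sum_le_sum fun j hj => h2 i hi j hj
    have h4 : ∑ i ∈ P, ∑ j ∈ Q, (q j0 * E) * |ah i * (γ i - γ j)| ≤
        (q j0 * E) * Ck := by
      have h5 : ∀ i, ∑ j ∈ Q, (q j0 * E) * |ah i * (γ i - γ j)| ≤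
          (q j0 * E) * ∑ j, |ah i * (γ i - γ j)| := by
        intro i
        rw [← Finset.mul_sum]
        refine mul_le_mul_of_nonneg_left ?_ (by positivity)
        exact Finset.sum_le_sum_of_subset_of_nonneg (Finset.subset_univ Q)
          (fun j _ _ => abs_nonneg _)
      calc ∑ i ∈ P, ∑ j ∈ Q, (q j0 * E) * |ah i * (γ i - γ j)|
          ≤ ∑ i ∈ P, (q j0 * E) * ∑ j, |ah i * (γ i - γ j)| :=
            Finset.sum_le_sum fun i _ => h5 i
        _ ≤ ∑ i, (q j0 * E) * ∑ j, |ah i * (γ i - γ j)| :=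
            Finset.sum_le_sum_of_subset_of_nonneg (Finset.subset_univ P)
              (fun i _ _ => by positivity)
        _ = (q j0 * E) * Ck := by rw [hCk, Finset.mul_sum]
    calc |∑ i ∈ P, ∑ j ∈ Q, t i j| ≤ ∑ i ∈ P, ∑ j ∈ Q, |t i j| := h1
      _ ≤ _ := h3.trans h4
  have bSLt : |∑ i ∈ Sel, ∑ j ∈ Lt, t i j| ≤ q j0 * E * Ck :=
    hblock _ _ fun i _ j hj => by nlinarith [hqle1 i, hqLt j hj, hqpos i, hqpos j, (hqpos j0).le,
      hEpos.le]
  have bS2S2 : |∑ i ∈ Sel2, ∑ j ∈ Sel2, t i j| ≤ q j0 * E * Ck :=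
    hblock _ _ fun i hi j hj => by
      rw [hqSel2 i hi]
      nlinarith [hbadSel2 j hj, hqpos j, hqpos j0]
  have bS2Lt : |∑ i ∈ Sel2, ∑ j ∈ Lt, t i j| ≤ q j0 * E * Ck :=
    hblock _ _ fun i hi j hj => by
      rw [hqSel2 i hi]
      nlinarith [hbadLt j hj, hqpos j, hqpos j0, hEpos]
  have bLtS : |∑ i ∈ Lt, ∑ j ∈ Sel, t i j| ≤ q j0 * E * Ck :=
    hblock _ _ fun i hi j _ => by nlinarith [hqLt i hi, hqle1 j, hqpos j, hqpos i,
      (hqpos j0).le, hEpos.le]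
  have bLtS2 : |∑ i ∈ Lt, ∑ j ∈ Sel2, t i j| ≤ q j0 * E * Ck :=
    hblock _ _ fun i hi j hj => by nlinarith [hqLt i hi, hqle1 j, hqpos j, hqpos i,
      (hqpos j0).le, hEpos.le]
  have bLtLt : |∑ i ∈ Lt, ∑ j ∈ Lt, t i j| ≤ q j0 * E * Ck :=
    hblock _ _ fun i hi j _ => by nlinarith [hqLt i hi, hqle1 j, hqpos j, hqpos i,
      (hqpos j0).le, hEpos.le]
  constructor
  · -- lower bound on A
    have hAsw : ∑ i ∈ Sel, ∑ j ∈ Sel2, (ah i - ah j) * (g * q i * q j * (γ i - γ j)) =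
        ∑ j ∈ Sel2, ∑ i ∈ Sel, (ah i - ah j) * (g * q i * q j * (γ i - γ j)) :=
      Finset.sum_comm
    rw [hAsw]
    have hinner : ∀ j ∈ Sel2, gm * (τ2 * μ / T) * q j0 ≤
        ∑ i ∈ Sel, (ah i - ah j) * (g * q i * q j * (γ i - γ j)) := by
      intro j hj
      have hconst : ∑ i ∈ Sel, (ah i - ah j) * (g * q i * q j * (γ i - γ j)) =
          ((ah i0 - ah j) * (g * q i0 * q j0)) * ∑ i ∈ Sel, (γ i - γ j) := by
        rw [Finset.mul_sum]
        refine Finset.sum_congr rfl fun i hi => ?_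
        rw [hqSel i hi, hahSel i hi, hqSel2 j hj]
        ring
      rw [hconst]
      have h1 : τ2 ≤ ah i0 - ah j := by have := hgap3 j hj; linarith
      have h2 : (0:ℝ) < (T:ℝ) := Nat.cast_pos.mpr hT
      have h3 : 1 / (T:ℝ) ≤ q i0 := hq1T
      have h4 : μ ≤ ∑ i ∈ Sel, (γ i - γ j) := hloc j hj
      have h5 : gm * (1 / T) ≤ g * q i0 := by
        refine mul_le_mul hgmin h3 (by positivity) hg0.le
      have h6 : τ2 * (gm * (1/T) * q j0) ≤ (ah i0 - ah j) * (g * q i0 * q j0) := by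
        have h7 := mul_le_mul_of_nonneg_right h5 hqj0pos.le
        have h8 : (0:ℝ) ≤ gm * (1/T) * q j0 :=
          le_of_lt (mul_pos (mul_pos hgm (by positivity)) hqj0pos)
        refine mul_le_mul h1 h7 h8 (by linarith)
      calc gm * (τ2 * μ / T) * q j0 = (τ2 * (gm * (1/T) * q j0)) * μ := by ring
        _ ≤ ((ah i0 - ah j) * (g * q i0 * q j0)) * μ :=
            mul_le_mul_of_nonneg_right h6 hμ.le
        _ ≤ ((ah i0 - ah j) * (g * q i0 * q j0)) * ∑ i ∈ Sel, (γ i - γ j) := by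
            refine mul_le_mul_of_nonneg_left h4 ?_
            have h9 := hgap3 j hj
            have h10 : (0:ℝ) < ah i0 - ah j := by linarith
            have h11 : (0:ℝ) < (ah i0 - ah j) * (g * q i0 * q j0) :=
              mul_pos h10 (mul_pos (mul_pos hg0 (hqpos i0)) hqj0pos)
            linarith
    have hterm_nonneg : ∀ j ∈ Sel2, 0 ≤
        ∑ i ∈ Sel, (ah i - ah j) * (g * q i * q j * (γ i - γ j)) := by
      intro j hj
      refine le_trans ?_ (hinner j hj)
      have h2 : (0:ℝ) < (T:ℝ) := Nat.cast_pos.mpr hT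
      exact le_of_lt (mul_pos (mul_pos hgm (div_pos (mul_pos hτ2 hμ) h2)) hqj0pos)
    calc gm * (τ2 * μ / T) * q j0
        ≤ ∑ i ∈ Sel, (ah i - ah j0) * (g * q i * q j0 * (γ i - γ j0)) := hinner j0 hj0
      _ ≤ ∑ j ∈ Sel2, ∑ i ∈ Sel, (ah i - ah j) * (g * q i * q j * (γ i - γ j)) :=
          Finset.single_le_sum hterm_nonneg hj0
  · -- error bound
    have hdiff : g * (∑ i, ∑ j, t i j) -
        ∑ i ∈ Sel, ∑ j ∈ Sel2, (ah i - ah j) * (g * q i * q j * (γ i - γ j)) =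
        g * (∑ i ∈ Sel, ∑ j ∈ Lt, t i j + ∑ i ∈ Sel2, ∑ j ∈ Sel2, t i j
          + ∑ i ∈ Sel2, ∑ j ∈ Lt, t i j + ∑ i ∈ Lt, ∑ j ∈ Sel, t i j
          + ∑ i ∈ Lt, ∑ j ∈ Sel2, t i j + ∑ i ∈ Lt, ∑ j ∈ Lt, t i j) := by
      rw [hW, hA2, hSS]; ring
    rw [hdiff, abs_mul, abs_of_pos hg0]
    have habs : |∑ i ∈ Sel, ∑ j ∈ Lt, t i j + ∑ i ∈ Sel2, ∑ j ∈ Sel2, t i j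
          + ∑ i ∈ Sel2, ∑ j ∈ Lt, t i j + ∑ i ∈ Lt, ∑ j ∈ Sel, t i j
          + ∑ i ∈ Lt, ∑ j ∈ Sel2, t i j + ∑ i ∈ Lt, ∑ j ∈ Lt, t i j| ≤
        6 * (q j0 * E * Ck) := by
      have a1 := abs_add_le (∑ i ∈ Sel, ∑ j ∈ Lt, t i j) (∑ i ∈ Sel2, ∑ j ∈ Sel2, t i j)
      have a2 := abs_add_le (∑ i ∈ Sel, ∑ j ∈ Lt, t i j + ∑ i ∈ Sel2, ∑ j ∈ Sel2, t i j)
        (∑ i ∈ Sel2, ∑ j ∈ Lt, t i j)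
      have a3 := abs_add_le (∑ i ∈ Sel, ∑ j ∈ Lt, t i j + ∑ i ∈ Sel2, ∑ j ∈ Sel2, t i j
        + ∑ i ∈ Sel2, ∑ j ∈ Lt, t i j) (∑ i ∈ Lt, ∑ j ∈ Sel, t i j)
      have a4 := abs_add_le (∑ i ∈ Sel, ∑ j ∈ Lt, t i j + ∑ i ∈ Sel2, ∑ j ∈ Sel2, t i j
        + ∑ i ∈ Sel2, ∑ j ∈ Lt, t i j + ∑ i ∈ Lt, ∑ j ∈ Sel, t i j)
        (∑ i ∈ Lt, ∑ j ∈ Sel2, t i j)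
      have a5 := abs_add_le (∑ i ∈ Sel, ∑ j ∈ Lt, t i j + ∑ i ∈ Sel2, ∑ j ∈ Sel2, t i j
        + ∑ i ∈ Sel2, ∑ j ∈ Lt, t i j + ∑ i ∈ Lt, ∑ j ∈ Sel, t i j
        + ∑ i ∈ Lt, ∑ j ∈ Sel2, t i j) (∑ i ∈ Lt, ∑ j ∈ Lt, t i j)
      linarith [bSLt, bS2S2, bS2Lt, bLtS, bLtS2, bLtLt]
    calc g * |∑ i ∈ Sel, ∑ j ∈ Lt, t i j + ∑ i ∈ Sel2, ∑ j ∈ Sel2, t i j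
          + ∑ i ∈ Sel2, ∑ j ∈ Lt, t i j + ∑ i ∈ Lt, ∑ j ∈ Sel, t i j
          + ∑ i ∈ Lt, ∑ j ∈ Sel2, t i j + ∑ i ∈ Lt, ∑ j ∈ Lt, t i j|
        ≤ 1 * (6 * (q j0 * E * Ck)) := by
          refine mul_le_mul hg1 habs (abs_nonneg _) zero_le_one
      _ = (6 * Ck) * E * q j0 := by ring
      _ = (6 * ∑ i, ∑ j, |ah i * (γ i - γ j)|) * E * q j0 := by rw [hCk]

def TotK {d T : ℕ} (Emb : S → Vec d) (v pbar phat : Vec d) (Z : Fin T → S) (yk R : ℝ) : ℝ :=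
  gfun Emb v (R • pbar) Z yk *
    ∑ i, ∑ j, qw Emb (R • pbar) Z i * qw Emb (R • pbar) Z j * iprod phat (Emb (Z i)) *
      (yk * iprod (Emb (Z i)) v - yk * iprod (Emb (Z j)) v)

def AKf {d T : ℕ} (Emb : S → Vec d) (v pbar phat : Vec d) (Z : Fin T → S) (yk R : ℝ) : ℝ :=
  ∑ i ∈ Finset.univ.filter (fun i => Z i ∈ selSet Emb pbar Z),
    ∑ j ∈ Finset.univ.filter (fun j => Z j ∈ sel2Set Emb pbar Z),
      (iprod phat (Emb (Z i)) - iprod phat (Emb (Z j))) *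
        (gfun Emb v (R • pbar) Z yk * qw Emb (R • pbar) Z i * qw Emb (R • pbar) Z j *
          (yk * iprod (Emb (Z i)) v - yk * iprod (Emb (Z j)) v))

lemma iprod_sub {d : ℕ} (x y z : Vec d) : iprod x (y - z) = iprod x y - iprod x z :=
  inner_sub_right x y z

lemma TotK_eq {d T : ℕ} (hT : 0 < T) (Emb : S → Vec d) (v pbar phat : Vec d) (Z : Fin T → S)
    (yk R : ℝ) :
    TotK Emb v pbar phat Z yk R =
      gfun Emb v (R • pbar) Z yk * (yk *
        ((∑ i, qw Emb (R • pbar) Z i * iprod (Emb (Z i)) v * iprod phat (Emb (Z i))) -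
          fAttn Emb v (R • pbar) Z * ∑ i, qw Emb (R • pbar) Z i * iprod phat (Emb (Z i)))) := by
  unfold TotK
  congr 1
  have h := sum_pair_expand (qw Emb (R • pbar) Z) (fun i => iprod phat (Emb (Z i)))
    (fun i => yk * iprod (Emb (Z i)) v)
  beta_reduce at h
  rw [h, qw_sum_one Emb (R • pbar) Z hT, fAttn_eq_sum Emb v (R • pbar) Z hT]
  have e1 : ∑ i, qw Emb (R • pbar) Z i * iprod phat (Emb (Z i)) * (yk * iprod (Emb (Z i)) v)
      = yk * ∑ i, qw Emb (R • pbar) Z i * iprod (Emb (Z i)) v * iprod phat (Emb (Z i)) := by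
    rw [Finset.mul_sum]
    exact Finset.sum_congr rfl fun i _ => by ring
  have e2 : ∑ i, qw Emb (R • pbar) Z i * (yk * iprod (Emb (Z i)) v)
      = yk * ∑ i, qw Emb (R • pbar) Z i * iprod (Emb (Z i)) v := by
    rw [Finset.mul_sum]
    exact Finset.sum_congr rfl fun i _ => by ring
  rw [e1, e2]
  ring

set_option maxHeartbeats 2000000 in
lemma perk {d T : ℕ} (hT : 0 < T) (Emb : S → Vec d) (v pbar phat : Vec d)
    (Z : Fin T → S) (yk : ℝ) (hyk : yk = 1 ∨ yk = -1)
    (μ τ1 τ2 ε : ℝ) (hμ : 0 < μ) (hτ1 : 0 < τ1) (hτ2 : 0 < τ2) (hε : 0 < ε)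
    (hlocal : ∀ j : Fin T, Z j ∈ sel2Set Emb pbar Z →
        μ ≤ ∑ i ∈ Finset.univ.filter (fun i => Z i ∈ selSet Emb pbar Z),
              (yk * iprod (Emb (Z i)) v - yk * iprod (Emb (Z j)) v))
    (hsep1 : ∀ s ∈ selSet Emb pbar Z, ∀ s' ∈ sel2Set Emb pbar Z,
        τ1 ≤ iprod pbar (Emb s - Emb s'))
    (hsep2 : ∀ s ∈ sel2Set Emb pbar Z, ∀ s' ∈ selLtSet Emb pbar Z,
        τ1 ≤ iprod pbar (Emb s - Emb s'))
    (hequiv : selSet Emb phat Z = selSet Emb pbar Z)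
    (hsep3 : ∀ s ∈ selSet Emb phat Z, ∀ s' ∈ Set.range Z, s' ∉ selSet Emb phat Z →
        τ2 ≤ iprod phat (Emb s - Emb s')) :
    ∃ R0 : ℝ, 1 ≤ R0 ∧ ∀ R : ℝ, R0 ≤ R →
      0 ≤ AKf Emb v pbar phat Z yk R ∧
      |TotK Emb v pbar phat Z yk R - AKf Emb v pbar phat Z yk R| ≤
        ε * AKf Emb v pbar phat Z yk R := by
  haveI : Nonempty (Fin T) := Fin.pos_iff_nonempty.mp hT
  by_cases hS2 : (Finset.univ.filter (fun j => Z j ∈ sel2Set Emb pbar Z)).Nonempty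
  case neg =>
    have hS2e : Finset.univ.filter (fun j => Z j ∈ sel2Set Emb pbar Z) = ∅ :=
      Finset.not_nonempty_iff_eq_empty.mp hS2
    have hallSel : ∀ i, Z i ∈ selSet Emb phat Z := by
      intro i
      rw [hequiv]
      by_contra h
      obtain ⟨j, hj⟩ := exists_mem_sel2Set Emb pbar Z hT h
      exact absurd (Finset.mem_filter.mpr ⟨Finset.mem_univ j, hj⟩)
        (by rw [hS2e]; exact Finset.notMem_empty j)
    refine ⟨1, le_rfl, fun R _ => ?_⟩
    have hA0 : AKf Emb v pbar phat Z yk R = 0 := by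
      unfold AKf
      rw [hS2e]
      simp
    have hTot0 : TotK Emb v pbar phat Z yk R = 0 := by
      unfold TotK
      have h := sum_pair_expand (qw Emb (R • pbar) Z) (fun i => iprod phat (Emb (Z i)))
        (fun i => yk * iprod (Emb (Z i)) v)
      beta_reduce at h
      rw [h, qw_sum_one Emb (R • pbar) Z hT]
      have hconst : ∀ i, iprod phat (Emb (Z i)) = iprod phat (Emb (Z ⟨0, hT⟩)) := fun i =>
        selSet_inner_eq Emb phat Z (hallSel i) (hallSel ⟨0, hT⟩)
      have e1 : ∑ i, qw Emb (R • pbar) Z i * iprod phat (Emb (Z i)) * (yk * iprod (Emb (Z i)) v)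
          = iprod phat (Emb (Z ⟨0, hT⟩)) *
              ∑ i, qw Emb (R • pbar) Z i * (yk * iprod (Emb (Z i)) v) := by
        rw [Finset.mul_sum]
        exact Finset.sum_congr rfl fun i _ => by rw [hconst i]; ring
      have e2 : ∑ i, qw Emb (R • pbar) Z i * iprod phat (Emb (Z i))
          = iprod phat (Emb (Z ⟨0, hT⟩)) * ∑ i, qw Emb (R • pbar) Z i := by
        rw [Finset.mul_sum]
        exact Finset.sum_congr rfl fun i _ => by rw [hconst i]; ring
      rw [e1, e2, qw_sum_one Emb (R • pbar) Z hT]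
      ring
    rw [hA0, hTot0]
    simp
  case pos =>
    obtain ⟨j0, hj0mem⟩ := hS2
    have hj0 : Z j0 ∈ sel2Set Emb pbar Z := (Finset.mem_filter.mp hj0mem).2
    obtain ⟨i0, hi0sel⟩ := exists_mem_selSet Emb pbar Z hT
    have hi0mem : i0 ∈ Finset.univ.filter (fun i => Z i ∈ selSet Emb pbar Z) :=
      Finset.mem_filter.mpr ⟨Finset.mem_univ i0, hi0sel⟩
    -- constants
    set Ck : ℝ := ∑ i, ∑ j, |iprod phat (Emb (Z i)) *
      (yk * iprod (Emb (Z i)) v - yk * iprod (Emb (Z j)) v)| with hCkdef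
    set Bk : ℝ := (∑ i, |iprod (Emb (Z i)) v|) + 1 with hBkdef
    set gm : ℝ := (1 + Real.exp Bk)⁻¹ with hgmdef
    have hCk0 : 0 ≤ Ck :=
      Finset.sum_nonneg fun i _ => Finset.sum_nonneg fun j _ => abs_nonneg _
    have hgm : 0 < gm := by rw [hgmdef]; positivity
    have hTpos : (0:ℝ) < (T:ℝ) := Nat.cast_pos.mpr hT
    have hc0 : 0 < gm * (τ2 * μ / T) := mul_pos hgm (div_pos (mul_pos hτ2 hμ) hTpos)
    have harg : 0 < (6 * Ck + 1) / (ε * (gm * (τ2 * μ / T))) :=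
      div_pos (by linarith) (mul_pos hε hc0)
    refine ⟨max 1 (Real.log ((6 * Ck + 1) / (ε * (gm * (τ2 * μ / T)))) / τ1),
      le_max_left _ _, fun R hR => ?_⟩
    have hR1 : (1:ℝ) ≤ R := le_trans (le_max_left _ _) hR
    have hRpos : (0:ℝ) < R := lt_of_lt_of_le one_pos hR1
    -- the exponential bound
    have hEbound : (6 * Ck) * Real.exp (-(R * τ1)) ≤ ε * (gm * (τ2 * μ / T)) := by
      have hlog : Real.log ((6 * Ck + 1) / (ε * (gm * (τ2 * μ / T)))) / τ1 ≤ R :=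
        le_trans (le_max_right _ _) hR
      have h2 : Real.log ((6 * Ck + 1) / (ε * (gm * (τ2 * μ / T)))) ≤ R * τ1 :=
        (div_le_iff₀ hτ1).mp hlog
      have h3 : (6 * Ck + 1) / (ε * (gm * (τ2 * μ / T))) ≤ Real.exp (R * τ1) := by
        calc (6 * Ck + 1) / (ε * (gm * (τ2 * μ / T)))
            = Real.exp (Real.log ((6 * Ck + 1) / (ε * (gm * (τ2 * μ / T))))) :=
              (Real.exp_log harg).symm
          _ ≤ Real.exp (R * τ1) := Real.exp_le_exp.mpr h2
      have h4 : Real.exp (-(R * τ1)) ≤ (ε * (gm * (τ2 * μ / T))) / (6 * Ck + 1) := by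
        rw [Real.exp_neg]
        calc (Real.exp (R * τ1))⁻¹
            ≤ ((6 * Ck + 1) / (ε * (gm * (τ2 * μ / T))))⁻¹ := inv_anti₀ harg h3
          _ = (ε * (gm * (τ2 * μ / T))) / (6 * Ck + 1) := by rw [inv_div]
      calc (6 * Ck) * Real.exp (-(R * τ1))
          ≤ (6 * Ck + 1) * ((ε * (gm * (τ2 * μ / T))) / (6 * Ck + 1)) := by
            refine mul_le_mul (by linarith) h4 (Real.exp_pos _).le (by linarith)
        _ = ε * (gm * (τ2 * μ / T)) := mul_div_cancel₀ _ (by linarith)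
    -- facts feeding `core`
    have hiRb : ∀ i : Fin T, iprod (R • pbar) (Emb (Z i)) = R * iprod pbar (Emb (Z i)) :=
      fun i => iprod_smul R pbar (Emb (Z i))
    have hqpos : ∀ i, 0 < qw Emb (R • pbar) Z i := fun i => qw_pos Emb (R • pbar) Z hT i
    have hqle1 : ∀ i, qw Emb (R • pbar) Z i ≤ 1 := fun i => qw_le_one Emb (R • pbar) Z hT i
    have htri : ∀ i : Fin T,
        i ∈ Finset.univ.filter (fun i => Z i ∈ selSet Emb pbar Z) ∨
        i ∈ Finset.univ.filter (fun j => Z j ∈ sel2Set Emb pbar Z) ∨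
        i ∈ Finset.univ.filter (fun i => Z i ∈ selLtSet Emb pbar Z) := by
      intro i
      by_cases h1 : Z i ∈ selSet Emb pbar Z
      · exact Or.inl (Finset.mem_filter.mpr ⟨Finset.mem_univ i, h1⟩)
      by_cases h2 : Z i ∈ sel2Set Emb pbar Z
      · exact Or.inr (Or.inl (Finset.mem_filter.mpr ⟨Finset.mem_univ i, h2⟩))
      · exact Or.inr (Or.inr (Finset.mem_filter.mpr ⟨Finset.mem_univ i,
          mem_selLtSet_of Emb pbar Z hT h1 h2⟩))
    have hd21 : ∀ i ∈ Finset.univ.filter (fun j => Z j ∈ sel2Set Emb pbar Z),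
        i ∉ Finset.univ.filter (fun i => Z i ∈ selSet Emb pbar Z) := by
      intro i hi hmem
      exact (Finset.mem_filter.mp hi).2.2.1 (Finset.mem_filter.mp hmem).2
    have hdL1 : ∀ i ∈ Finset.univ.filter (fun i => Z i ∈ selLtSet Emb pbar Z),
        i ∉ Finset.univ.filter (fun i => Z i ∈ selSet Emb pbar Z) := by
      intro i hi hmem
      exact (Finset.mem_filter.mp hi).2.2 (Or.inl (Finset.mem_filter.mp hmem).2)
    have hdL2 : ∀ i ∈ Finset.univ.filter (fun i => Z i ∈ selLtSet Emb pbar Z),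
        i ∉ Finset.univ.filter (fun j => Z j ∈ sel2Set Emb pbar Z) := by
      intro i hi hmem
      exact (Finset.mem_filter.mp hi).2.2 (Or.inr (Finset.mem_filter.mp hmem).2)
    have hqSel : ∀ i ∈ Finset.univ.filter (fun i => Z i ∈ selSet Emb pbar Z),
        qw Emb (R • pbar) Z i = qw Emb (R • pbar) Z i0 := by
      intro i hi
      refine qw_eq_of_eq Emb (R • pbar) Z hT ?_
      rw [hiRb i, hiRb i0, selSet_inner_eq Emb pbar Z (Finset.mem_filter.mp hi).2 hi0sel]
    have hqSel2 : ∀ j ∈ Finset.univ.filter (fun j => Z j ∈ sel2Set Emb pbar Z),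
        qw Emb (R • pbar) Z j = qw Emb (R • pbar) Z j0 := by
      intro j hj
      refine qw_eq_of_eq Emb (R • pbar) Z hT ?_
      rw [hiRb j, hiRb j0, sel2Set_inner_eq Emb pbar Z (Finset.mem_filter.mp hj).2 hj0]
    have hahSel : ∀ i ∈ Finset.univ.filter (fun i => Z i ∈ selSet Emb pbar Z),
        iprod phat (Emb (Z i)) = iprod phat (Emb (Z i0)) := by
      intro i hi
      refine selSet_inner_eq Emb phat Z ?_ ?_
      · rw [hequiv]; exact (Finset.mem_filter.mp hi).2
      · rw [hequiv]; exact hi0sel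
    have hq1T : 1 / (T : ℝ) ≤ qw Emb (R • pbar) Z i0 := by
      have hD := sumExp_pos hT Emb (R • pbar) Z
      rw [qw, le_div_iff₀ hD]
      have hsum : ∑ j, Real.exp (iprod (R • pbar) (Emb (Z j))) ≤
          (T : ℝ) * Real.exp (iprod (R • pbar) (Emb (Z i0))) := by
        calc ∑ j, Real.exp (iprod (R • pbar) (Emb (Z j)))
            ≤ ∑ _j : Fin T, Real.exp (iprod (R • pbar) (Emb (Z i0))) := by
              refine Finset.sum_le_sum fun j _ => Real.exp_le_exp.mpr ?_
              rw [hiRb j, hiRb i0]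
              exact mul_le_mul_of_nonneg_left (hi0sel.2 j) hRpos.le
          _ = (T : ℝ) * Real.exp (iprod (R • pbar) (Emb (Z i0))) := by
              rw [Finset.sum_const, Finset.card_univ, Fintype.card_fin, nsmul_eq_mul]
      calc 1 / (T : ℝ) * ∑ j, Real.exp (iprod (R • pbar) (Emb (Z j)))
          ≤ 1 / (T : ℝ) * ((T : ℝ) * Real.exp (iprod (R • pbar) (Emb (Z i0)))) :=
            mul_le_mul_of_nonneg_left hsum (by positivity)
        _ = Real.exp (iprod (R • pbar) (Emb (Z i0))) := by field_simp
    have hgap1 : τ1 ≤ iprod pbar (Emb (Z i0)) - iprod pbar (Emb (Z j0)) := by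
      have := hsep1 (Z i0) hi0sel (Z j0) hj0
      rwa [iprod_sub] at this
    have hq2E : qw Emb (R • pbar) Z j0 ≤ Real.exp (-(R * τ1)) := by
      rw [qw_ratio Emb (R • pbar) Z hT j0 i0]
      calc qw Emb (R • pbar) Z i0 *
            Real.exp (iprod (R • pbar) (Emb (Z j0)) - iprod (R • pbar) (Emb (Z i0)))
          ≤ 1 * Real.exp (-(R * τ1)) := by
            refine mul_le_mul (hqle1 i0) (Real.exp_le_exp.mpr ?_) (Real.exp_pos _).le
              zero_le_one
            rw [hiRb j0, hiRb i0]
            nlinarith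
        _ = Real.exp (-(R * τ1)) := one_mul _
    have hqLt : ∀ l ∈ Finset.univ.filter (fun i => Z i ∈ selLtSet Emb pbar Z),
        qw Emb (R • pbar) Z l ≤ qw Emb (R • pbar) Z j0 * Real.exp (-(R * τ1)) := by
      intro l hl
      have hlm : Z l ∈ selLtSet Emb pbar Z := (Finset.mem_filter.mp hl).2
      have hg2 : τ1 ≤ iprod pbar (Emb (Z j0)) - iprod pbar (Emb (Z l)) := by
        have := hsep2 (Z j0) hj0 (Z l) hlm
        rwa [iprod_sub] at this
      rw [qw_ratio Emb (R • pbar) Z hT l j0]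
      refine mul_le_mul_of_nonneg_left (Real.exp_le_exp.mpr ?_) (hqpos j0).le
      rw [hiRb l, hiRb j0]
      nlinarith
    have hgap3 : ∀ j ∈ Finset.univ.filter (fun j => Z j ∈ sel2Set Emb pbar Z),
        iprod phat (Emb (Z j)) + τ2 ≤ iprod phat (Emb (Z i0)) := by
      intro j hj
      have hjm := (Finset.mem_filter.mp hj).2
      have h1 : Z i0 ∈ selSet Emb phat Z := by rw [hequiv]; exact hi0sel
      have h2 : Z j ∉ selSet Emb phat Z := by rw [hequiv]; exact hjm.2.1
      have h3 := hsep3 (Z i0) h1 (Z j) ⟨j, rfl⟩ h2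
      rw [iprod_sub] at h3
      linarith
    have hloc : ∀ j ∈ Finset.univ.filter (fun j => Z j ∈ sel2Set Emb pbar Z),
        μ ≤ ∑ i ∈ Finset.univ.filter (fun i => Z i ∈ selSet Emb pbar Z),
            (yk * iprod (Emb (Z i)) v - yk * iprod (Emb (Z j)) v) := fun j hj =>
      hlocal j (Finset.mem_filter.mp hj).2
    -- g bounds
    have hyabs : |yk| = 1 := by rcases hyk with h | h <;> simp [h]
    have hcB : ∀ i, |iprod (Emb (Z i)) v| ≤ Bk := by
      intro i
      have := Finset.single_le_sum (f := fun i => |iprod (Emb (Z i)) v|)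
        (fun j _ => abs_nonneg _) (Finset.mem_univ i)
      rw [hBkdef]; linarith
    have hfB : yk * fAttn Emb v (R • pbar) Z ≤ Bk := by
      calc yk * fAttn Emb v (R • pbar) Z ≤ |yk * fAttn Emb v (R • pbar) Z| := le_abs_self _
        _ = |fAttn Emb v (R • pbar) Z| := by rw [abs_mul, hyabs, one_mul]
        _ ≤ Bk := fAttn_abs_le Emb v (R • pbar) Z hT Bk hcB
    have hgmin : gm ≤ gfun Emb v (R • pbar) Z yk := gfun_ge Emb v (R • pbar) Z yk Bk hfB
    have hg0 : 0 < gfun Emb v (R • pbar) Z yk := gfun_pos Emb v (R • pbar) Z yk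
    have hg1 : gfun Emb v (R • pbar) Z yk ≤ 1 := gfun_le_one Emb v (R • pbar) Z yk
    -- apply `core`
    have hcore := core hT
      (Finset.univ.filter (fun i => Z i ∈ selSet Emb pbar Z))
      (Finset.univ.filter (fun j => Z j ∈ sel2Set Emb pbar Z))
      (Finset.univ.filter (fun i => Z i ∈ selLtSet Emb pbar Z))
      (qw Emb (R • pbar) Z) (fun i => iprod phat (Emb (Z i)))
      (fun i => yk * iprod (Emb (Z i)) v)
      (gfun Emb v (R • pbar) Z yk) gm (Real.exp (-(R * τ1))) τ2 μ
      htri hd21 hdL1 hdL2 hqpos hqle1 hg0 hg1 hgm hgmin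
      i0 hi0mem j0 hj0mem hqSel hqSel2 hahSel hq1T hq2E hqLt hτ2 hμ hgap3 hloc
    beta_reduce at hcore
    obtain ⟨hlow, herr⟩ := hcore
    have hlow' : gm * (τ2 * μ / T) * qw Emb (R • pbar) Z j0 ≤ AKf Emb v pbar phat Z yk R :=
      hlow
    have herr' : |TotK Emb v pbar phat Z yk R - AKf Emb v pbar phat Z yk R| ≤
        (6 * Ck) * Real.exp (-(R * τ1)) * qw Emb (R • pbar) Z j0 := herr
    have hqj0 := hqpos j0
    constructor
    · calc (0:ℝ) ≤ gm * (τ2 * μ / T) * qw Emb (R • pbar) Z j0 :=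
            le_of_lt (mul_pos hc0 hqj0)
        _ ≤ AKf Emb v pbar phat Z yk R := hlow'
    · calc |TotK Emb v pbar phat Z yk R - AKf Emb v pbar phat Z yk R|
          ≤ (6 * Ck) * Real.exp (-(R * τ1)) * qw Emb (R • pbar) Z j0 := herr'
        _ ≤ ε * (gm * (τ2 * μ / T)) * qw Emb (R • pbar) Z j0 :=
            mul_le_mul_of_nonneg_right hEbound hqj0.le
        _ = ε * (gm * (τ2 * μ / T) * qw Emb (R • pbar) Z j0) := by ring
        _ ≤ ε * AKf Emb v pbar phat Z yk R :=
            mul_le_mul_of_nonneg_left hlow' hε.le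

end Statement14Aux

/-- gradient approximation: for a locally optimal unit direction `pbar` with
separation `τ1`, and any equivalent `phat` with margin `τ2`, for `R` large enough the
directional derivative `-phat·∇_p L(E^1, R pbar)` is within a `(1 ± ε)` factor of the
dominating term `A`. -/
theorem statement14 {S : Type*} (d T n : ℕ) (hd0 : 0 < d) (hT : 0 < T) (hn : 0 < n)
    (X : Fin n → Fin T → S) (y : Fin n → ℝ) (hy : ∀ k, y k = 1 ∨ y k = -1)
    (Emb : S → Vec d) (v : Vec d) (hv : ‖v‖ = 1)
    (pbar : Vec d) (hpbar : ‖pbar‖ = 1)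
    (μ : ℝ) (hμ : 0 < μ)
    (hlocal : ∀ k, ∀ j : Fin T, X k j ∈ sel2Set Emb pbar (X k) →
      μ ≤ ∑ i ∈ Finset.univ.filter (fun i => X k i ∈ selSet Emb pbar (X k)),
            (y k * (iprod (Emb (X k i)) (v)) - y k * (iprod (Emb (X k j)) (v))))
    (τ1 : ℝ) (hτ1 : 0 < τ1)
    (hsep1 : ∀ k, ∀ s ∈ selSet Emb pbar (X k), ∀ s' ∈ sel2Set Emb pbar (X k),
      τ1 ≤ (iprod (pbar) (Emb s - Emb s')))
    (hsep2 : ∀ k, ∀ s ∈ sel2Set Emb pbar (X k), ∀ s' ∈ selLtSet Emb pbar (X k),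
      τ1 ≤ (iprod (pbar) (Emb s - Emb s')))
    (ε : ℝ) (hε : 0 < ε)
    (phat : Vec d)
    (hequiv : ∀ k, selSet Emb phat (X k) = selSet Emb pbar (X k))
    (τ2 : ℝ) (hτ2 : 0 < τ2)
    (hsep3 : ∀ k, ∀ s ∈ selSet Emb phat (X k), ∀ s' ∈ Set.range (X k),
      s' ∉ selSet Emb phat (X k) → τ2 ≤ (iprod (phat) (Emb s - Emb s'))) :
    ∃ R0 : ℝ, 0 < R0 ∧ ∀ R : ℝ, R0 ≤ R →
      -(iprod (phat) (gradP X y Emb v (R • pbar))) ≤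
          (1 + ε) * domTerm Emb v X y (R • pbar) phat ∧
      (1 - ε) * domTerm Emb v X y (R • pbar) phat ≤
          -(iprod (phat) (gradP X y Emb v (R • pbar))) := by
  have hper : ∀ k : Fin n, ∃ R0 : ℝ, 1 ≤ R0 ∧ ∀ R : ℝ, R0 ≤ R →
      0 ≤ AKf Emb v pbar phat (X k) (y k) R ∧
      |TotK Emb v pbar phat (X k) (y k) R - AKf Emb v pbar phat (X k) (y k) R| ≤
        ε * AKf Emb v pbar phat (X k) (y k) R := fun k =>
    perk hT Emb v pbar phat (X k) (y k) (hy k) μ τ1 τ2 ε hμ hτ1 hτ2 hε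
      (hlocal k) (hsep1 k) (hsep2 k) (hequiv k) (hsep3 k)
  choose R0f hR0f1 hR0f2 using hper
  refine ⟨1 + ∑ k, |R0f k|, by positivity, fun R hR => ?_⟩
  have hsumnn : (0:ℝ) ≤ ∑ k, |R0f k| := Finset.sum_nonneg fun k _ => abs_nonneg _
  have hR1 : (1:ℝ) ≤ R := by linarith
  have hRpos : (0:ℝ) < R := by linarith
  have hRk : ∀ k, R0f k ≤ R := by
    intro k
    have h1 : |R0f k| ≤ ∑ k', |R0f k'| :=
      Finset.single_le_sum (f := fun k' => |R0f k'|) (fun _ _ => abs_nonneg _)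
        (Finset.mem_univ k)
    have h2 := le_abs_self (R0f k)
    linarith
  have hkey := fun k => hR0f2 k R (hRk k)
  have hgradEq : -(iprod phat (gradP X y Emb v (R • pbar))) =
      (1 / n : ℝ) * ∑ k, TotK Emb v pbar phat (X k) (y k) R := by
    rw [iprod_gradP_eq hT X y Emb v (R • pbar) phat,
        lossD_apply hT X y Emb v (R • pbar) phat]
    have hkk : ∀ k ∈ Finset.univ,
        ((- y k) * gfun Emb v (R • pbar) (X k) (y k)) *
          ((∑ i, qw Emb (R • pbar) (X k) i * (iprod (Emb (X k i)) v) *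
              (iprod phat (Emb (X k i)))) -
            fAttn Emb v (R • pbar) (X k) *
              ∑ i, qw Emb (R • pbar) (X k) i * (iprod phat (Emb (X k i)))) =
        - TotK Emb v pbar phat (X k) (y k) R := by
      intro k _
      rw [TotK_eq hT Emb v pbar phat (X k) (y k) R]
      ring
    rw [Finset.sum_congr rfl hkk, Finset.sum_neg_distrib]
    ring
  have hdomEq : domTerm Emb v X y (R • pbar) phat =
      (1 / n : ℝ) * ∑ k, AKf Emb v pbar phat (X k) (y k) R := by
    unfold domTerm AKf
    congr 1
    refine Finset.sum_congr rfl fun k _ => ?_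
    simp only [selSet_smul Emb (X k) hRpos pbar, sel2Set_smul Emb (X k) hRpos pbar]
  have hnn : (0:ℝ) ≤ (1 / n : ℝ) := by positivity
  constructor
  · rw [hgradEq, hdomEq]
    have hs : ∑ k, TotK Emb v pbar phat (X k) (y k) R ≤
        ∑ k, (1 + ε) * AKf Emb v pbar phat (X k) (y k) R := by
      refine Finset.sum_le_sum fun k _ => ?_
      obtain ⟨h1, h2⟩ := hkey k
      have h3 := (abs_le.mp h2).2
      linarith
    calc (1 / n : ℝ) * ∑ k, TotK Emb v pbar phat (X k) (y k) R
        ≤ (1 / n : ℝ) * ∑ k, (1 + ε) * AKf Emb v pbar phat (X k) (y k) R :=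
          mul_le_mul_of_nonneg_left hs hnn
      _ = (1 + ε) * ((1 / n : ℝ) * ∑ k, AKf Emb v pbar phat (X k) (y k) R) := by
          rw [← Finset.mul_sum]; ring
  · rw [hgradEq, hdomEq]
    have hs : ∑ k, (1 - ε) * AKf Emb v pbar phat (X k) (y k) R ≤
        ∑ k, TotK Emb v pbar phat (X k) (y k) R := by
      refine Finset.sum_le_sum fun k _ => ?_
      obtain ⟨h1, h2⟩ := hkey k
      have h3 := (abs_le.mp h2).1
      linarith
    calc (1 - ε) * ((1 / n : ℝ) * ∑ k, AKf Emb v pbar phat (X k) (y k) R)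
        = (1 / n : ℝ) * ∑ k, (1 - ε) * AKf Emb v pbar phat (X k) (y k) R := by
          rw [← Finset.mul_sum]; ring
      _ ≤ (1 / n : ℝ) * ∑ k, TotK Emb v pbar phat (X k) (y k) R :=
          mul_le_mul_of_nonneg_left hs hnn
end
end
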